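/- arXiv:1810.11355 — 3 statements merged into one kernel-verified Lean document; each statement's English description precedes it below -/
import Mathlib

section
/- The rule Repl⁻ is admissible in G3c^=: for every atomic formula P, terms s and r, variable v not occurring in s or r, and finite multisets Γ, Δ of formulas, if the sequent s = r, P[v/r], Γ ⇒ Δ is derivable in G3c^=, then the sequent s = r, P[v/s], Γ ⇒ Δ is derivable in G3c^=. -/
open FirstOrder Language Multiset

universe u v

variable {L : FirstOrder.Language.{u, v}}

/-- Number of occurrences of the variable `v` in a term. -/
def tCount (v : ℕ) : L.Term ℕ → ℕ
  | .var w => if w = v then 1 else 0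
  | .func _ ts => Finset.univ.sum fun i => tCount v (ts i)

/-- First-order formulas over the language `L` (with built-in equality),
with natural numbers as variables. -/
inductive Fm (L : FirstOrder.Language.{u, v}) : Type (max u v) where
  | falsum : Fm L
  | equal : L.Term ℕ → L.Term ℕ → Fm L
  | rel {l : ℕ} : L.Relations l → (Fin l → L.Term ℕ) → Fm L
  | and : Fm L → Fm L → Fm L
  | or : Fm L → Fm L → Fm L
  | imp : Fm L → Fm L → Fm L
  | all : ℕ → Fm L → Fm L
  | ex : ℕ → Fm L → Fm L

namespace Fm

/-- Atomic formulas: equalities and relational atoms. -/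
inductive IsAtomic : Fm L → Prop where
  | equal (t₁ t₂ : L.Term ℕ) : (Fm.equal t₁ t₂).IsAtomic
  | rel {l : ℕ} (R : L.Relations l) (ts : Fin l → L.Term ℕ) : (Fm.rel R ts).IsAtomic

/-- Number of free occurrences of the variable `v` in a formula. -/
def fCount (v : ℕ) : Fm L → ℕ
  | falsum => 0
  | equal t₁ t₂ => tCount v t₁ + tCount v t₂
  | rel _ ts => Finset.univ.sum fun i => tCount v (ts i)
  | and A B => fCount v A + fCount v B
  | or A B => fCount v A + fCount v B
  | imp A B => fCount v A + fCount v B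
  | all y A => if y = v then 0 else fCount v A
  | ex y A => if y = v then 0 else fCount v A

/-- The set of free variables of a formula. -/
def freeVars : Fm L → Set ℕ
  | falsum => ∅
  | equal t₁ t₂ => {w | tCount w t₁ ≠ 0 ∨ tCount w t₂ ≠ 0}
  | rel _ ts => {w | ∃ i, tCount w (ts i) ≠ 0}
  | and A B => A.freeVars ∪ B.freeVars
  | or A B => A.freeVars ∪ B.freeVars
  | imp A B => A.freeVars ∪ B.freeVars
  | all y A => A.freeVars \ {y}
  | ex y A => A.freeVars \ {y}

/-- Simultaneous substitution of terms for the free variables of a formula. -/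
def ssub (σ : ℕ → L.Term ℕ) : Fm L → Fm L
  | falsum => falsum
  | equal t₁ t₂ => equal (t₁.subst σ) (t₂.subst σ)
  | rel R ts => rel R fun i => (ts i).subst σ
  | and A B => and (A.ssub σ) (B.ssub σ)
  | or A B => or (A.ssub σ) (B.ssub σ)
  | imp A B => imp (A.ssub σ) (B.ssub σ)
  | all y A => all y (A.ssub (Function.update σ y (Term.var y)))
  | ex y A => ex y (A.ssub (Function.update σ y (Term.var y)))

/-- `A.subst v t` is `A[v/t]`, the substitution of the term `t`
for the variable `v` in `A`. -/
def subst (v : ℕ) (t : L.Term ℕ) (A : Fm L) : Fm L :=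
  A.ssub (Function.update (Term.var : ℕ → L.Term ℕ) v t)

/-- `t` is free for `x` in `A` (no free occurrence of `x` lies in the scope of a
quantifier binding a variable of `t`). -/
def freeFor (t : L.Term ℕ) (x : ℕ) : Fm L → Prop
  | falsum => True
  | equal _ _ => True
  | rel _ _ => True
  | and A B => freeFor t x A ∧ freeFor t x B
  | or A B => freeFor t x A ∧ freeFor t x B
  | imp A B => freeFor t x A ∧ freeFor t x B
  | all y A => x = y ∨ x ∉ A.freeVars ∨ (tCount y t = 0 ∧ freeFor t x A)
  | ex y A => x = y ∨ x ∉ A.freeVars ∨ (tCount y t = 0 ∧ freeFor t x A)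

end Fm

/-- The rule Repl, given as the relation between the antecedent of the premiss and the
antecedent of the conclusion (the succedent is unchanged): from
`s = r, P[v/s], P[v/r], Γ ⇒ Δ` infer `s = r, P[v/s], Γ ⇒ Δ`, for `P` atomic and
`v` not occurring in `s, r`. -/
def ReplFull (L : FirstOrder.Language.{u, v}) : Multiset (Fm L) → Multiset (Fm L) → Prop := fun Γp Γc =>
  ∃ (s r : L.Term ℕ) (v : ℕ) (P : Fm L) (Γ : Multiset (Fm L)),
    P.IsAtomic ∧ tCount v s = 0 ∧ tCount v r = 0 ∧
    Γp = Fm.equal s r ::ₘ P.subst v s ::ₘ P.subst v r ::ₘ Γ ∧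
    Γc = Fm.equal s r ::ₘ P.subst v s ::ₘ Γ

/-- The rule Repl⁻: from `s = r, P[v/r], Γ ⇒ Δ` infer `s = r, P[v/s], Γ ⇒ Δ`,
for `P` atomic and `v` not occurring in `s, r`. -/
def ReplMinus (L : FirstOrder.Language.{u, v}) : Multiset (Fm L) → Multiset (Fm L) → Prop := fun Γp Γc =>
  ∃ (s r : L.Term ℕ) (v : ℕ) (P : Fm L) (Γ : Multiset (Fm L)),
    P.IsAtomic ∧ tCount v s = 0 ∧ tCount v r = 0 ∧
    Γp = Fm.equal s r ::ₘ P.subst v r ::ₘ Γ ∧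
    Γc = Fm.equal s r ::ₘ P.subst v s ::ₘ Γ

/-- The rule Repl₁⁻: Repl⁻ restricted to atomic `P` with exactly one occurrence of `v`. -/
def ReplMinus1 (L : FirstOrder.Language.{u, v}) : Multiset (Fm L) → Multiset (Fm L) → Prop := fun Γp Γc =>
  ∃ (s r : L.Term ℕ) (v : ℕ) (P : Fm L) (Γ : Multiset (Fm L)),
    P.IsAtomic ∧ tCount v s = 0 ∧ tCount v r = 0 ∧ Fm.fCount v P = 1 ∧
    Γp = Fm.equal s r ::ₘ P.subst v r ::ₘ Γ ∧
    Γc = Fm.equal s r ::ₘ P.subst v s ::ₘ Γ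

/-- `DerC rp n Γ Δ`: the sequent `Γ ⇒ Δ` has a derivation of height at most `n` in the
classical multisuccedent G3 calculus `G3c` with the equality rule Ref and the
replacement rule given by `rp` (e.g. `ReplFull L` for `G3c^=`, `ReplMinus L` for `G3c^=⁻`,
`ReplMinus1 L` for `G3c₁^=⁻`). -/
inductive DerC (rp : Multiset (Fm L) → Multiset (Fm L) → Prop) :
    ℕ → Multiset (Fm L) → Multiset (Fm L) → Prop where
  | ax {n : ℕ} {Γ Δ : Multiset (Fm L)} {P : Fm L} (hP : P.IsAtomic) :
      DerC rp n (P ::ₘ Γ) (P ::ₘ Δ)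
  | botL {n : ℕ} {Γ Δ : Multiset (Fm L)} : DerC rp n (Fm.falsum ::ₘ Γ) Δ
  | andL {n : ℕ} {Γ Δ : Multiset (Fm L)} {A B : Fm L} :
      DerC rp n (A ::ₘ B ::ₘ Γ) Δ → DerC rp (n + 1) (Fm.and A B ::ₘ Γ) Δ
  | andR {n : ℕ} {Γ Δ : Multiset (Fm L)} {A B : Fm L} :
      DerC rp n Γ (A ::ₘ Δ) → DerC rp n Γ (B ::ₘ Δ) → DerC rp (n + 1) Γ (Fm.and A B ::ₘ Δ)
  | orL {n : ℕ} {Γ Δ : Multiset (Fm L)} {A B : Fm L} :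
      DerC rp n (A ::ₘ Γ) Δ → DerC rp n (B ::ₘ Γ) Δ → DerC rp (n + 1) (Fm.or A B ::ₘ Γ) Δ
  | orR {n : ℕ} {Γ Δ : Multiset (Fm L)} {A B : Fm L} :
      DerC rp n Γ (A ::ₘ B ::ₘ Δ) → DerC rp (n + 1) Γ (Fm.or A B ::ₘ Δ)
  | impL {n : ℕ} {Γ Δ : Multiset (Fm L)} {A B : Fm L} :
      DerC rp n Γ (A ::ₘ Δ) → DerC rp n (B ::ₘ Γ) Δ → DerC rp (n + 1) (Fm.imp A B ::ₘ Γ) Δ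
  | impR {n : ℕ} {Γ Δ : Multiset (Fm L)} {A B : Fm L} :
      DerC rp n (A ::ₘ Γ) (B ::ₘ Δ) → DerC rp (n + 1) Γ (Fm.imp A B ::ₘ Δ)
  | allL {n : ℕ} {Γ Δ : Multiset (Fm L)} {x : ℕ} {t : L.Term ℕ} {A : Fm L}
      (hf : Fm.freeFor t x A) :
      DerC rp n (A.subst x t ::ₘ Fm.all x A ::ₘ Γ) Δ → DerC rp (n + 1) (Fm.all x A ::ₘ Γ) Δ
  | allR {n : ℕ} {Γ Δ : Multiset (Fm L)} {x y : ℕ} {A : Fm L}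
      (hf : Fm.freeFor (Term.var y) x A) (hy : y ∉ (Fm.all x A).freeVars)
      (hΓ : ∀ C ∈ Γ, y ∉ Fm.freeVars C) (hΔ : ∀ C ∈ Δ, y ∉ Fm.freeVars C) :
      DerC rp n Γ (A.subst x (Term.var y) ::ₘ Δ) → DerC rp (n + 1) Γ (Fm.all x A ::ₘ Δ)
  | exL {n : ℕ} {Γ Δ : Multiset (Fm L)} {x y : ℕ} {A : Fm L}
      (hf : Fm.freeFor (Term.var y) x A) (hy : y ∉ (Fm.ex x A).freeVars)
      (hΓ : ∀ C ∈ Γ, y ∉ Fm.freeVars C) (hΔ : ∀ C ∈ Δ, y ∉ Fm.freeVars C) :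
      DerC rp n (A.subst x (Term.var y) ::ₘ Γ) Δ → DerC rp (n + 1) (Fm.ex x A ::ₘ Γ) Δ
  | exR {n : ℕ} {Γ Δ : Multiset (Fm L)} {x : ℕ} {t : L.Term ℕ} {A : Fm L}
      (hf : Fm.freeFor t x A) :
      DerC rp n Γ (A.subst x t ::ₘ Fm.ex x A ::ₘ Δ) → DerC rp (n + 1) Γ (Fm.ex x A ::ₘ Δ)
  | ref {n : ℕ} {Γ Δ : Multiset (Fm L)} (t : L.Term ℕ) :
      DerC rp n (Fm.equal t t ::ₘ Γ) Δ → DerC rp (n + 1) Γ Δ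
  | repl {n : ℕ} {Γp Γc Δ : Multiset (Fm L)} (h : rp Γp Γc) :
      DerC rp n Γp Δ → DerC rp (n + 1) Γc Δ

/-- `DerI rp n Γ Δ`: the sequent `Γ ⇒ Δ` has a derivation of height at most `n` in the
intuitionistic multisuccedent G3 calculus (the right rules for `→` and `∀` have
single-succedent premisses, and L→ repeats its principal formula) with the equality rule
Ref and the replacement rule given by `rp`. -/
inductive DerI (rp : Multiset (Fm L) → Multiset (Fm L) → Prop) :
    ℕ → Multiset (Fm L) → Multiset (Fm L) → Prop where
  | ax {n : ℕ} {Γ Δ : Multiset (Fm L)} {P : Fm L} (hP : P.IsAtomic) :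
      DerI rp n (P ::ₘ Γ) (P ::ₘ Δ)
  | botL {n : ℕ} {Γ Δ : Multiset (Fm L)} : DerI rp n (Fm.falsum ::ₘ Γ) Δ
  | andL {n : ℕ} {Γ Δ : Multiset (Fm L)} {A B : Fm L} :
      DerI rp n (A ::ₘ B ::ₘ Γ) Δ → DerI rp (n + 1) (Fm.and A B ::ₘ Γ) Δ
  | andR {n : ℕ} {Γ Δ : Multiset (Fm L)} {A B : Fm L} :
      DerI rp n Γ (A ::ₘ Δ) → DerI rp n Γ (B ::ₘ Δ) → DerI rp (n + 1) Γ (Fm.and A B ::ₘ Δ)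
  | orL {n : ℕ} {Γ Δ : Multiset (Fm L)} {A B : Fm L} :
      DerI rp n (A ::ₘ Γ) Δ → DerI rp n (B ::ₘ Γ) Δ → DerI rp (n + 1) (Fm.or A B ::ₘ Γ) Δ
  | orR {n : ℕ} {Γ Δ : Multiset (Fm L)} {A B : Fm L} :
      DerI rp n Γ (A ::ₘ B ::ₘ Δ) → DerI rp (n + 1) Γ (Fm.or A B ::ₘ Δ)
  | impL {n : ℕ} {Γ Δ : Multiset (Fm L)} {A B : Fm L} :
      DerI rp n (Fm.imp A B ::ₘ Γ) (A ::ₘ Δ) → DerI rp n (B ::ₘ Γ) Δ →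
      DerI rp (n + 1) (Fm.imp A B ::ₘ Γ) Δ
  | impR {n : ℕ} {Γ Δ : Multiset (Fm L)} {A B : Fm L} :
      DerI rp n (A ::ₘ Γ) {B} → DerI rp (n + 1) Γ (Fm.imp A B ::ₘ Δ)
  | allL {n : ℕ} {Γ Δ : Multiset (Fm L)} {x : ℕ} {t : L.Term ℕ} {A : Fm L}
      (hf : Fm.freeFor t x A) :
      DerI rp n (A.subst x t ::ₘ Fm.all x A ::ₘ Γ) Δ → DerI rp (n + 1) (Fm.all x A ::ₘ Γ) Δ
  | allR {n : ℕ} {Γ Δ : Multiset (Fm L)} {x y : ℕ} {A : Fm L}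
      (hf : Fm.freeFor (Term.var y) x A) (hy : y ∉ (Fm.all x A).freeVars)
      (hΓ : ∀ C ∈ Γ, y ∉ Fm.freeVars C) :
      DerI rp n Γ {A.subst x (Term.var y)} → DerI rp (n + 1) Γ (Fm.all x A ::ₘ Δ)
  | exL {n : ℕ} {Γ Δ : Multiset (Fm L)} {x y : ℕ} {A : Fm L}
      (hf : Fm.freeFor (Term.var y) x A) (hy : y ∉ (Fm.ex x A).freeVars)
      (hΓ : ∀ C ∈ Γ, y ∉ Fm.freeVars C) (hΔ : ∀ C ∈ Δ, y ∉ Fm.freeVars C) :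
      DerI rp n (A.subst x (Term.var y) ::ₘ Γ) Δ → DerI rp (n + 1) (Fm.ex x A ::ₘ Γ) Δ
  | exR {n : ℕ} {Γ Δ : Multiset (Fm L)} {x : ℕ} {t : L.Term ℕ} {A : Fm L}
      (hf : Fm.freeFor t x A) :
      DerI rp n Γ (A.subst x t ::ₘ Fm.ex x A ::ₘ Δ) → DerI rp (n + 1) Γ (Fm.ex x A ::ₘ Δ)
  | ref {n : ℕ} {Γ Δ : Multiset (Fm L)} (t : L.Term ℕ) :
      DerI rp n (Fm.equal t t ::ₘ Γ) Δ → DerI rp (n + 1) Γ Δ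
  | repl {n : ℕ} {Γp Γc Δ : Multiset (Fm L)} (h : rp Γp Γc) :
      DerI rp n Γp Δ → DerI rp (n + 1) Γc Δ


section Aux
variable {L : FirstOrder.Language.{u, v}}

/-! ### Term lemmas -/

theorem tsubst_comp (t : L.Term ℕ) (τ σ : ℕ → L.Term ℕ) :
    (t.subst τ).subst σ = t.subst (fun w => (τ w).subst σ) := by
  induction t with
  | var a => simp
  | func f ts ih => simp [ih]

theorem tsubst_congr {t : L.Term ℕ} {τ σ : ℕ → L.Term ℕ}
    (h : ∀ w, tCount w t ≠ 0 → τ w = σ w) : t.subst τ = t.subst σ := by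
  induction t with
  | var a => exact h a (by simp [tCount])
  | func f ts ih =>
      simp only [Term.subst, Term.func.injEq, heq_eq_eq, true_and]
      funext i
      exact ih i fun w hw => h w (by simp [tCount, Finset.sum_eq_zero_iff]; exact ⟨i, hw⟩)

theorem tsubst_id (t : L.Term ℕ) : t.subst Term.var = t := by
  induction t with
  | var a => simp
  | func f ts ih => simp [ih]

theorem tCount_subst_ne {z : ℕ} {t : L.Term ℕ} {σ : ℕ → L.Term ℕ} :
    tCount z (t.subst σ) ≠ 0 ↔ ∃ w, tCount w t ≠ 0 ∧ tCount z (σ w) ≠ 0 := by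
  induction t with
  | var a =>
      simp only [Term.subst, tCount]
      constructor
      · exact fun h => ⟨a, by simp [tCount], h⟩
      · rintro ⟨w, hw, h⟩
        have : a = w := by by_contra hne; simp [tCount, hne] at hw
        exact this ▸ h
  | func f ts ih =>
      simp only [Term.subst, tCount, Finset.sum_eq_zero_iff, Finset.mem_univ, true_implies]
      constructor
      · intro h
        have h' : ¬ ∀ i ∈ Finset.univ, tCount z ((ts i).subst σ) = 0 := by
          intro hh; exact h (Finset.sum_eq_zero_iff.mpr hh)
        push_neg at h'
        obtain ⟨i, -, hi⟩ := h'
        obtain ⟨w, hw, h2⟩ := (ih i).mp hi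
        refine ⟨w, fun hz => ?_, h2⟩
        rw [Finset.sum_eq_zero_iff] at hz
        exact hw (hz i (Finset.mem_univ i))
      · rintro ⟨w, hw, h2⟩ hall
        rw [Finset.sum_eq_zero_iff] at hall
        have hw' : ¬ ∀ i ∈ Finset.univ, tCount w (ts i) = 0 := by
          intro hh; exact hw (Finset.sum_eq_zero_iff.mpr hh)
        push_neg at hw'
        obtain ⟨i, -, hi⟩ := hw'
        exact (ih i).mpr ⟨w, hi, h2⟩ (hall i (Finset.mem_univ i))

theorem tCount_subst_zero {z : ℕ} {t : L.Term ℕ} {σ : ℕ → L.Term ℕ}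
    (h : ∀ w, tCount w t ≠ 0 → tCount z (σ w) = 0) : tCount z (t.subst σ) = 0 := by
  by_contra hc
  obtain ⟨w, hw, h2⟩ := tCount_subst_ne.mp hc
  exact h2 (h w hw)

/-- Bound on the variables of a term. -/
def tB : L.Term ℕ → ℕ
  | .var w => w + 1
  | .func _ ts => Finset.univ.sup fun i => tB (ts i)

theorem tCount_eq_zero_of_tB_le {t : L.Term ℕ} {w : ℕ} (h : tB t ≤ w) : tCount w t = 0 := by
  induction t with
  | var a =>
      have : a ≠ w := by simp [tB] at h; omega
      simp [tCount, this]
  | func f ts ih =>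
      simp only [tCount, Finset.sum_eq_zero_iff, Finset.mem_univ, true_implies]
      intro i
      refine ih i (le_trans ?_ h)
      exact Finset.le_sup (f := fun i => tB (ts i)) (Finset.mem_univ i)

end Aux
/-! ### Formula lemmas -/

namespace Fm

/-- Bound variables of a formula. -/
def bv : Fm L → Set ℕ
  | falsum => ∅
  | equal _ _ => ∅
  | rel _ _ => ∅
  | and A B => bv A ∪ bv B
  | or A B => bv A ∪ bv B
  | imp A B => bv A ∪ bv B
  | all y A => {y} ∪ bv A
  | ex y A => {y} ∪ bv A

/-- A bound on all variables (free, bound, or in terms) of a formula. -/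
def fB : Fm L → ℕ
  | falsum => 0
  | equal t₁ t₂ => max (tB t₁) (tB t₂)
  | rel _ ts => Finset.univ.sup fun i => tB (ts i)
  | and A B => max (fB A) (fB B)
  | or A B => max (fB A) (fB B)
  | imp A B => max (fB A) (fB B)
  | all y A => max (y + 1) (fB A)
  | ex y A => max (y + 1) (fB A)

theorem notMem_freeVars_of_fB_le {A : Fm L} {w : ℕ} (h : fB A ≤ w) : w ∉ freeVars A := by
  induction A with
  | falsum => simp [freeVars]
  | equal t₁ t₂ =>
      simp only [fB, max_le_iff] at h
      simp only [freeVars, Set.mem_setOf_eq, not_or, not_not]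
      exact ⟨tCount_eq_zero_of_tB_le h.1, tCount_eq_zero_of_tB_le h.2⟩
  | rel R ts =>
      simp only [freeVars, Set.mem_setOf_eq, not_exists, not_not]
      intro i
      refine tCount_eq_zero_of_tB_le (le_trans ?_ h)
      exact Finset.le_sup (f := fun i => tB (ts i)) (Finset.mem_univ i)
  | and A B ihA ihB =>
      simp only [fB, max_le_iff] at h
      simp only [freeVars, Set.mem_union]
      exact fun hc => hc.elim (ihA h.1) (ihB h.2)
  | or A B ihA ihB =>
      simp only [fB, max_le_iff] at h
      simp only [freeVars, Set.mem_union]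
      exact fun hc => hc.elim (ihA h.1) (ihB h.2)
  | imp A B ihA ihB =>
      simp only [fB, max_le_iff] at h
      simp only [freeVars, Set.mem_union]
      exact fun hc => hc.elim (ihA h.1) (ihB h.2)
  | all y A ih =>
      simp only [fB, max_le_iff] at h
      simp only [freeVars, Set.mem_diff]
      exact fun hc => ih h.2 hc.1
  | ex y A ih =>
      simp only [fB, max_le_iff] at h
      simp only [freeVars, Set.mem_diff]
      exact fun hc => ih h.2 hc.1

theorem notMem_bv_of_fB_le {A : Fm L} {w : ℕ} (h : fB A ≤ w) : w ∉ bv A := by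
  induction A with
  | falsum => simp [bv]
  | equal t₁ t₂ => simp [bv]
  | rel R ts => simp [bv]
  | and A B ihA ihB =>
      simp only [fB, max_le_iff] at h
      simp only [bv, Set.mem_union]
      exact fun hc => hc.elim (ihA h.1) (ihB h.2)
  | or A B ihA ihB =>
      simp only [fB, max_le_iff] at h
      simp only [bv, Set.mem_union]
      exact fun hc => hc.elim (ihA h.1) (ihB h.2)
  | imp A B ihA ihB =>
      simp only [fB, max_le_iff] at h
      simp only [bv, Set.mem_union]
      exact fun hc => hc.elim (ihA h.1) (ihB h.2)
  | all y A ih =>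
      simp only [fB, max_le_iff] at h
      simp only [bv, Set.mem_union, Set.mem_singleton_iff]
      rintro (rfl | hc)
      · omega
      · exact ih h.2 hc
  | ex y A ih =>
      simp only [fB, max_le_iff] at h
      simp only [bv, Set.mem_union, Set.mem_singleton_iff]
      rintro (rfl | hc)
      · omega
      · exact ih h.2 hc

theorem bv_ssub (A : Fm L) (σ : ℕ → L.Term ℕ) : bv (A.ssub σ) = bv A := by
  induction A generalizing σ with
  | falsum => rfl
  | equal t₁ t₂ => rfl
  | rel R ts => rfl
  | and A B ihA ihB => simp [ssub, bv, ihA, ihB]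
  | or A B ihA ihB => simp [ssub, bv, ihA, ihB]
  | imp A B ihA ihB => simp [ssub, bv, ihA, ihB]
  | all y A ih => simp [ssub, bv, ih]
  | ex y A ih => simp [ssub, bv, ih]

theorem isAtomic_ssub {P : Fm L} (hP : P.IsAtomic) (σ : ℕ → L.Term ℕ) :
    (P.ssub σ).IsAtomic := by
  cases hP with
  | equal t₁ t₂ => exact IsAtomic.equal _ _
  | rel R ts => exact IsAtomic.rel _ _

theorem isAtomic_subst {P : Fm L} (hP : P.IsAtomic) (x : ℕ) (t : L.Term ℕ) :
    (P.subst x t).IsAtomic := isAtomic_ssub hP _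

theorem bv_atomic {P : Fm L} (hP : P.IsAtomic) : bv P = ∅ := by
  cases hP <;> rfl

theorem freeFor_atomic {P : Fm L} (hP : P.IsAtomic) (t : L.Term ℕ) (x : ℕ) :
    freeFor t x P := by
  cases hP <;> trivial

theorem ssub_congr {A : Fm L} {σ τ : ℕ → L.Term ℕ}
    (h : ∀ w ∈ freeVars A, σ w = τ w) : A.ssub σ = A.ssub τ := by
  induction A generalizing σ τ with
  | falsum => rfl
  | equal t₁ t₂ =>
      simp only [ssub, equal.injEq]
      constructor <;>
        exact tsubst_congr fun w hw => h w (by simp [freeVars]; tauto)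
  | rel R ts =>
      simp only [ssub, rel.injEq, heq_eq_eq, true_and]
      funext i
      exact tsubst_congr fun w hw => h w ⟨i, hw⟩
  | and A B ihA ihB =>
      simp only [ssub, and.injEq]
      exact ⟨ihA fun w hw => h w (Or.inl hw), ihB fun w hw => h w (Or.inr hw)⟩
  | or A B ihA ihB =>
      simp only [ssub, or.injEq]
      exact ⟨ihA fun w hw => h w (Or.inl hw), ihB fun w hw => h w (Or.inr hw)⟩
  | imp A B ihA ihB =>
      simp only [ssub, imp.injEq]
      exact ⟨ihA fun w hw => h w (Or.inl hw), ihB fun w hw => h w (Or.inr hw)⟩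
  | all y A ih =>
      simp only [ssub, all.injEq, true_and]
      refine ih fun w hw => ?_
      rcases eq_or_ne w y with rfl | hne
      · simp
      · rw [Function.update_of_ne hne, Function.update_of_ne hne]
        exact h w ⟨hw, hne⟩
  | ex y A ih =>
      simp only [ssub, ex.injEq, true_and]
      refine ih fun w hw => ?_
      rcases eq_or_ne w y with rfl | hne
      · simp
      · rw [Function.update_of_ne hne, Function.update_of_ne hne]
        exact h w ⟨hw, hne⟩

theorem ssub_id (A : Fm L) : A.ssub Term.var = A := by
  induction A with
  | falsum => rfl
  | equal t₁ t₂ => simp [ssub, tsubst_id]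
  | rel R ts => simp [ssub, tsubst_id]
  | and A B ihA ihB => simp [ssub, ihA, ihB]
  | or A B ihA ihB => simp [ssub, ihA, ihB]
  | imp A B ihA ihB => simp [ssub, ihA, ihB]
  | all y A ih => simp [ssub, Function.update_eq_self, ih]
  | ex y A ih => simp [ssub, Function.update_eq_self, ih]

theorem subst_of_not_free {A : Fm L} {x : ℕ} (t : L.Term ℕ) (h : x ∉ freeVars A) :
    A.subst x t = A := by
  rw [subst, show A.ssub (Function.update Term.var x t) = A.ssub Term.var from
    ssub_congr fun w hw => Function.update_of_ne (by rintro rfl; exact h hw) _ _, ssub_id]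

theorem mem_freeVars_ssub {A : Fm L} {σ : ℕ → L.Term ℕ} {z : ℕ}
    (h : z ∈ freeVars (A.ssub σ)) : ∃ w ∈ freeVars A, tCount z (σ w) ≠ 0 := by
  induction A generalizing σ with
  | falsum => exact absurd h (by simp [ssub, freeVars])
  | equal t₁ t₂ =>
      simp only [ssub, freeVars, Set.mem_setOf_eq] at h
      rcases h with h | h
      · obtain ⟨w, hw, h2⟩ := tCount_subst_ne.mp h
        exact ⟨w, Or.inl hw, h2⟩
      · obtain ⟨w, hw, h2⟩ := tCount_subst_ne.mp h
        exact ⟨w, Or.inr hw, h2⟩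
  | rel R ts =>
      simp only [ssub, freeVars, Set.mem_setOf_eq] at h
      obtain ⟨i, hi⟩ := h
      obtain ⟨w, hw, h2⟩ := tCount_subst_ne.mp hi
      exact ⟨w, ⟨i, hw⟩, h2⟩
  | and A B ihA ihB =>
      rcases h with h | h
      · obtain ⟨w, hw, h2⟩ := ihA h; exact ⟨w, Or.inl hw, h2⟩
      · obtain ⟨w, hw, h2⟩ := ihB h; exact ⟨w, Or.inr hw, h2⟩
  | or A B ihA ihB =>
      rcases h with h | h
      · obtain ⟨w, hw, h2⟩ := ihA h; exact ⟨w, Or.inl hw, h2⟩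
      · obtain ⟨w, hw, h2⟩ := ihB h; exact ⟨w, Or.inr hw, h2⟩
  | imp A B ihA ihB =>
      rcases h with h | h
      · obtain ⟨w, hw, h2⟩ := ihA h; exact ⟨w, Or.inl hw, h2⟩
      · obtain ⟨w, hw, h2⟩ := ihB h; exact ⟨w, Or.inr hw, h2⟩
  | all y A ih =>
      obtain ⟨h1, h2⟩ := h
      obtain ⟨w, hw, h3⟩ := ih h1
      rcases eq_or_ne w y with hwy | hne
      · subst hwy
        rw [Function.update_self] at h3
        have hzy : w = z := by by_contra hne2; simp [tCount, hne2] at h3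
        exact absurd hzy.symm (by simpa using h2)
      · rw [Function.update_of_ne hne] at h3
        exact ⟨w, ⟨hw, hne⟩, h3⟩
  | ex y A ih =>
      obtain ⟨h1, h2⟩ := h
      obtain ⟨w, hw, h3⟩ := ih h1
      rcases eq_or_ne w y with hwy | hne
      · subst hwy
        rw [Function.update_self] at h3
        have hzy : w = z := by by_contra hne2; simp [tCount, hne2] at h3
        exact absurd hzy.symm (by simpa using h2)
      · rw [Function.update_of_ne hne] at h3
        exact ⟨w, ⟨hw, hne⟩, h3⟩

end Fm
namespace Fm

theorem tsubst_cancel {s : L.Term ℕ} {y : ℕ} {u : L.Term ℕ} (h : tCount y s = 0) :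
    s.subst (Function.update Term.var y u) = s := by
  rw [show s.subst (Function.update Term.var y u) = s.subst Term.var from
    tsubst_congr fun w hw => Function.update_of_ne (by rintro rfl; exact hw h) _ _, tsubst_id]

theorem tsubst_update (t : L.Term ℕ) (x : ℕ) (u : L.Term ℕ) (σ : ℕ → L.Term ℕ) :
    (t.subst (Function.update Term.var x u)).subst σ
      = t.subst (Function.update σ x (u.subst σ)) := by
  rw [tsubst_comp]
  congr 1
  funext w
  rcases eq_or_ne w x with rfl | hne
  · simp
  · simp [Function.update_of_ne hne]

theorem freeFor_var_of_not_bv {A : Fm L} {z : ℕ} (x : ℕ) (h : z ∉ bv A) :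
    freeFor (Term.var z : L.Term ℕ) x A := by
  induction A with
  | falsum => trivial
  | equal t₁ t₂ => trivial
  | rel R ts => trivial
  | and A B ihA ihB =>
      exact ⟨ihA fun hc => h (Or.inl hc), ihB fun hc => h (Or.inr hc)⟩
  | or A B ihA ihB =>
      exact ⟨ihA fun hc => h (Or.inl hc), ihB fun hc => h (Or.inr hc)⟩
  | imp A B ihA ihB =>
      exact ⟨ihA fun hc => h (Or.inl hc), ihB fun hc => h (Or.inr hc)⟩
  | all y A ih =>
      refine Or.inr (Or.inr ⟨?_, ih fun hc => h (Or.inr hc)⟩)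
      have hzy : z ≠ y := fun hc => h (Or.inl hc)
      simp [tCount, hzy]
  | ex y A ih =>
      refine Or.inr (Or.inr ⟨?_, ih fun hc => h (Or.inr hc)⟩)
      have hzy : z ≠ y := fun hc => h (Or.inl hc)
      simp [tCount, hzy]

/-- L1: substitution followed by simultaneous substitution. -/
theorem subst_ssub {A : Fm L} {x : ℕ} {u : L.Term ℕ} (σ : ℕ → L.Term ℕ)
    (hf : freeFor u x A) :
    (A.subst x u).ssub σ = A.ssub (Function.update σ x (u.subst σ)) := by
  induction A generalizing σ with
  | falsum => rfl
  | equal t₁ t₂ => simp only [subst, ssub, tsubst_update]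
  | rel R ts =>
      simp only [subst, ssub, rel.injEq, heq_eq_eq, true_and]
      funext i
      exact tsubst_update _ _ _ _
  | and A B ihA ihB =>
      obtain ⟨h1, h2⟩ := hf
      simp only [subst, ssub] at *
      rw [ihA _ h1, ihB _ h2]
  | or A B ihA ihB =>
      obtain ⟨h1, h2⟩ := hf
      simp only [subst, ssub] at *
      rw [ihA _ h1, ihB _ h2]
  | imp A B ihA ihB =>
      obtain ⟨h1, h2⟩ := hf
      simp only [subst, ssub] at *
      rw [ihA _ h1, ihB _ h2]
  | all y A ih =>
      rcases eq_or_ne x y with rfl | hxy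
      · have e1 : (all x A).subst x u = all x A := by
          simp [subst, ssub, Function.update_idem, Function.update_eq_self, ssub_id]
        rw [e1]
        show (all x A).ssub σ = _
        simp [ssub, Function.update_idem]
      · have hf' : x ∉ A.freeVars ∨ (tCount y u = 0 ∧ freeFor u x A) := by
          rcases hf with h | h | h
          · exact absurd h hxy
          · exact Or.inl h
          · exact Or.inr h
        rcases hf' with hnf | ⟨hyu, hfA⟩
        · rw [subst_of_not_free u (show x ∉ (all y A).freeVars from fun hc => hnf hc.1)]
          exact ssub_congr fun w hw =>
            (Function.update_of_ne (by rintro rfl; exact hnf hw.1) _ _).symm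
        · have e1 : (all y A).subst x u = all y (A.subst x u) := by
            simp only [subst, ssub, all.injEq, true_and]
            congr 1
            rw [Function.update_comm hxy, Function.update_eq_self]
          rw [e1]
          show all y ((A.subst x u).ssub (Function.update σ y (Term.var y))) = _
          rw [ih _ hfA]
          simp only [ssub, all.injEq, true_and]
          congr 1
          have e2 : u.subst (Function.update σ y (Term.var y)) = u.subst σ :=
            tsubst_congr fun w hw =>
              Function.update_of_ne (by rintro rfl; exact hw hyu) _ _
          rw [e2, Function.update_comm hxy]
  | ex y A ih =>
      rcases eq_or_ne x y with rfl | hxy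
      · have e1 : (ex x A).subst x u = ex x A := by
          simp [subst, ssub, Function.update_idem, Function.update_eq_self, ssub_id]
        rw [e1]
        show (ex x A).ssub σ = _
        simp [ssub, Function.update_idem]
      · have hf' : x ∉ A.freeVars ∨ (tCount y u = 0 ∧ freeFor u x A) := by
          rcases hf with h | h | h
          · exact absurd h hxy
          · exact Or.inl h
          · exact Or.inr h
        rcases hf' with hnf | ⟨hyu, hfA⟩
        · rw [subst_of_not_free u (show x ∉ (ex y A).freeVars from fun hc => hnf hc.1)]
          exact ssub_congr fun w hw =>
            (Function.update_of_ne (by rintro rfl; exact hnf hw.1) _ _).symm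
        · have e1 : (ex y A).subst x u = ex y (A.subst x u) := by
            simp only [subst, ssub, ex.injEq, true_and]
            congr 1
            rw [Function.update_comm hxy, Function.update_eq_self]
          rw [e1]
          show ex y ((A.subst x u).ssub (Function.update σ y (Term.var y))) = _
          rw [ih _ hfA]
          simp only [ssub, ex.injEq, true_and]
          congr 1
          have e2 : u.subst (Function.update σ y (Term.var y)) = u.subst σ :=
            tsubst_congr fun w hw =>
              Function.update_of_ne (by rintro rfl; exact hw hyu) _ _
          rw [e2, Function.update_comm hxy]

/-- L3: substituting for the distinguished variable after a simultaneous substitution. -/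
theorem ssub_update_subst {A : Fm L} {y : ℕ} {u : L.Term ℕ} (σ : ℕ → L.Term ℕ)
    (hσ : ∀ w, w ≠ y → tCount y (σ w) = 0) :
    (A.ssub (Function.update σ y (Term.var y))).subst y u
      = A.ssub (Function.update σ y u) := by
  induction A generalizing σ with
  | falsum => rfl
  | equal t₁ t₂ =>
      simp only [ssub, subst, equal.injEq]
      constructor <;>
      · rw [tsubst_comp]
        apply tsubst_congr
        intro w _
        rcases eq_or_ne w y with rfl | hne
        · simp
        · rw [Function.update_of_ne hne, Function.update_of_ne hne]
          exact tsubst_cancel (hσ w hne)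
  | rel R ts =>
      simp only [ssub, subst, rel.injEq, heq_eq_eq, true_and]
      funext i
      rw [tsubst_comp]
      apply tsubst_congr
      intro w _
      rcases eq_or_ne w y with rfl | hne
      · simp
      · rw [Function.update_of_ne hne, Function.update_of_ne hne]
        exact tsubst_cancel (hσ w hne)
  | and A B ihA ihB =>
      simp only [ssub, subst] at *
      rw [← ihA _ hσ, ← ihB _ hσ]
  | or A B ihA ihB =>
      simp only [ssub, subst] at *
      rw [← ihA _ hσ, ← ihB _ hσ]
  | imp A B ihA ihB =>
      simp only [ssub, subst] at *
      rw [← ihA _ hσ, ← ihB _ hσ]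
  | all z A ih =>
      rcases eq_or_ne z y with rfl | hzy
      · simp only [ssub, subst, Function.update_idem, all.injEq, true_and]
        rw [show Function.update (Term.var : ℕ → L.Term ℕ) z (Term.var z) = Term.var from
          Function.update_eq_self _ _, ssub_id]
      · have key : Function.update (Function.update Term.var y u) z (Term.var z)
            = Function.update Term.var y u := by
          conv_lhs => rw [show (Term.var z : L.Term ℕ)
            = (Function.update Term.var y u) z from (Function.update_of_ne hzy _ _).symm]
          exact Function.update_eq_self _ _
        show all z (((A.ssub _)).ssub _) = _
        simp only [subst] at ih ⊢
        rw [key]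
        simp only [ssub, all.injEq, true_and]
        simp only [Function.update_comm (Ne.symm hzy)]
        exact ih (Function.update σ z (Term.var z)) fun w hw => by
          rcases eq_or_ne w z with rfl | hwz
          · rw [Function.update_self]; simp [tCount, hzy]
          · rw [Function.update_of_ne hwz]; exact hσ w hw
  | ex z A ih =>
      rcases eq_or_ne z y with rfl | hzy
      · simp only [ssub, subst, Function.update_idem, ex.injEq, true_and]
        rw [show Function.update (Term.var : ℕ → L.Term ℕ) z (Term.var z) = Term.var from
          Function.update_eq_self _ _, ssub_id]
      · have key : Function.update (Function.update Term.var y u) z (Term.var z)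
            = Function.update Term.var y u := by
          conv_lhs => rw [show (Term.var z : L.Term ℕ)
            = (Function.update Term.var y u) z from (Function.update_of_ne hzy _ _).symm]
          exact Function.update_eq_self _ _
        show ex z (((A.ssub _)).ssub _) = _
        simp only [subst] at ih ⊢
        rw [key]
        simp only [ssub, ex.injEq, true_and]
        simp only [Function.update_comm (Ne.symm hzy)]
        exact ih (Function.update σ z (Term.var z)) fun w hw => by
          rcases eq_or_ne w z with rfl | hwz
          · rw [Function.update_self]; simp [tCount, hzy]
          · rw [Function.update_of_ne hwz]; exact hσ w hw

end Fm
namespace Fm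

/-- L4: preservation of `freeFor` under simultaneous substitution. -/
theorem freeFor_ssub {A : Fm L} {x : ℕ} {t' : L.Term ℕ} (σ : ℕ → L.Term ℕ)
    (hf : freeFor t' x A)
    (hx : ∀ w, w ≠ x → tCount x (σ w) = 0)
    (hb : ∀ z ∈ bv A, ∀ w, w ≠ z → tCount z (σ w) = 0) :
    freeFor (t'.subst σ) x (A.ssub (Function.update σ x (Term.var x))) := by
  induction A generalizing σ with
  | falsum => trivial
  | equal t₁ t₂ => trivial
  | rel R ts => trivial
  | and A B ihA ihB =>
      obtain ⟨h1, h2⟩ := hf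
      exact ⟨ihA _ h1 hx fun z hz => hb z (Or.inl hz),
        ihB _ h2 hx fun z hz => hb z (Or.inr hz)⟩
  | or A B ihA ihB =>
      obtain ⟨h1, h2⟩ := hf
      exact ⟨ihA _ h1 hx fun z hz => hb z (Or.inl hz),
        ihB _ h2 hx fun z hz => hb z (Or.inr hz)⟩
  | imp A B ihA ihB =>
      obtain ⟨h1, h2⟩ := hf
      exact ⟨ihA _ h1 hx fun z hz => hb z (Or.inl hz),
        ihB _ h2 hx fun z hz => hb z (Or.inr hz)⟩
  | all z B ih =>
      show freeFor _ x (all z _)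
      rcases eq_or_ne x z with rfl | hxz
      · exact Or.inl rfl
      · rcases hf with h | h | ⟨hg, hfB⟩
        · exact absurd h hxz
        · refine Or.inr (Or.inl ?_)
          intro hc
          obtain ⟨w, hw, h2⟩ := mem_freeVars_ssub hc
          have hwx : w ≠ x := fun hc2 => h (hc2 ▸ hw)
          rcases eq_or_ne w z with rfl | hwz
          · rw [Function.update_self] at h2
            simp [tCount, Ne.symm hxz] at h2
          · rw [Function.update_of_ne hwz, Function.update_of_ne hwx] at h2
            exact h2 (hx w hwx)
        · refine Or.inr (Or.inr ⟨?_, ?_⟩)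
          · exact tCount_subst_zero fun w hw =>
              hb z (Or.inl rfl) w (by rintro rfl; exact hw hg)
          · have e : Function.update (Function.update σ x (Term.var x)) z (Term.var z)
                = Function.update (Function.update σ z (Term.var z)) x (Term.var x) :=
              Function.update_comm hxz _ _ _
            rw [e]
            have e2 : t'.subst σ = t'.subst (Function.update σ z (Term.var z)) :=
              tsubst_congr fun w hw =>
                (Function.update_of_ne (by rintro rfl; exact hw hg) _ _).symm
            rw [e2]
            refine ih (Function.update σ z (Term.var z)) hfB ?_ ?_
            · intro w hw
              rcases eq_or_ne w z with rfl | hwz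
              · rw [Function.update_self]; simp [tCount]; exact Ne.symm hxz
              · rw [Function.update_of_ne hwz]; exact hx w hw
            · intro z' hz' w hw
              rcases eq_or_ne w z with rfl | hwz
              · rw [Function.update_self]; simp [tCount]
                rintro rfl; exact hw rfl
              · rw [Function.update_of_ne hwz]; exact hb z' (Or.inr hz') w hw
  | ex z B ih =>
      show freeFor _ x (ex z _)
      rcases eq_or_ne x z with rfl | hxz
      · exact Or.inl rfl
      · rcases hf with h | h | ⟨hg, hfB⟩
        · exact absurd h hxz
        · refine Or.inr (Or.inl ?_)
          intro hc
          obtain ⟨w, hw, h2⟩ := mem_freeVars_ssub hc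
          have hwx : w ≠ x := fun hc2 => h (hc2 ▸ hw)
          rcases eq_or_ne w z with rfl | hwz
          · rw [Function.update_self] at h2
            simp [tCount, Ne.symm hxz] at h2
          · rw [Function.update_of_ne hwz, Function.update_of_ne hwx] at h2
            exact h2 (hx w hwx)
        · refine Or.inr (Or.inr ⟨?_, ?_⟩)
          · exact tCount_subst_zero fun w hw =>
              hb z (Or.inl rfl) w (by rintro rfl; exact hw hg)
          · have e : Function.update (Function.update σ x (Term.var x)) z (Term.var z)
                = Function.update (Function.update σ z (Term.var z)) x (Term.var x) :=
              Function.update_comm hxz _ _ _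
            rw [e]
            have e2 : t'.subst σ = t'.subst (Function.update σ z (Term.var z)) :=
              tsubst_congr fun w hw =>
                (Function.update_of_ne (by rintro rfl; exact hw hg) _ _).symm
            rw [e2]
            refine ih (Function.update σ z (Term.var z)) hfB ?_ ?_
            · intro w hw
              rcases eq_or_ne w z with rfl | hwz
              · rw [Function.update_self]; simp [tCount]; exact Ne.symm hxz
              · rw [Function.update_of_ne hwz]; exact hx w hw
            · intro z' hz' w hw
              rcases eq_or_ne w z with rfl | hwz
              · rw [Function.update_self]; simp [tCount]
                rintro rfl; exact hw rfl
              · rw [Function.update_of_ne hwz]; exact hb z' (Or.inr hz') w hw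

/-- Renaming a freshly substituted variable. -/
theorem subst_subst_var {A : Fm L} {x u : ℕ} (z : ℕ)
    (hf : freeFor (Term.var u : L.Term ℕ) x A) (hu : u ∉ freeVars A ∨ u = x) :
    (A.subst x (Term.var u)).subst u (Term.var z) = A.subst x (Term.var z) := by
  rcases eq_or_ne u x with rfl | hux
  · have e : A.subst u (Term.var u : L.Term ℕ) = A := by
      show A.ssub (Function.update Term.var u (Term.var u)) = A
      rw [show Function.update (Term.var : ℕ → L.Term ℕ) u (Term.var u) = Term.var from
        Function.update_eq_self _ _, ssub_id]
    rw [e]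
  · have hu' : u ∉ freeVars A := hu.resolve_right hux
    show (A.subst x (Term.var u)).ssub (Function.update Term.var u (Term.var z)) = _
    rw [subst_ssub _ hf]
    simp only [Term.subst, Function.update_self]
    refine ssub_congr fun w hw => ?_
    rcases eq_or_ne w x with rfl | hwx
    · simp
    · rw [Function.update_of_ne hwx, Function.update_of_ne hwx,
        Function.update_of_ne (by rintro rfl; exact hu' hw) _ _]

/-- A formula without free `y` is fixed by substitution for `y`. -/
theorem map_subst_of_not_free {Γ : Multiset (Fm L)} {y : ℕ} (t : L.Term ℕ)
    (h : ∀ C ∈ Γ, y ∉ freeVars C) : Γ.map (Fm.subst y t) = Γ := by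
  rw [show Γ.map (Fm.subst y t) = Γ.map id from
    Multiset.map_congr rfl fun C hC => subst_of_not_free t (h C hC), Multiset.map_id]

end Fm

/-- A bound on the variables of a multiset of formulas. -/
def mB (Γ : Multiset (Fm L)) : ℕ := (Γ.map Fm.fB).sum

theorem fB_le_mB {Γ : Multiset (Fm L)} {C : Fm L} (h : C ∈ Γ) : Fm.fB C ≤ mB Γ :=
  Multiset.single_le_sum (fun x _ => Nat.zero_le x) _ (Multiset.mem_map_of_mem _ h)
namespace Fm

theorem subst_var_self (A : Fm L) (y : ℕ) : A.subst y (Term.var y) = A := by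
  show A.ssub (Function.update Term.var y (Term.var y)) = A
  rw [show Function.update (Term.var : ℕ → L.Term ℕ) y (Term.var y) = Term.var from
    Function.update_eq_self _ _, ssub_id]

theorem atomic_subst_subst {P : Fm L} (hP : P.IsAtomic) {v v₀ : ℕ}
    (h₀ : v₀ ∉ freeVars P) (u : L.Term ℕ) :
    (P.subst v (Term.var v₀)).subst v₀ u = P.subst v u := by
  rcases eq_or_ne v₀ v with rfl | hne
  · rw [subst_var_self]
  · show (P.subst v (Term.var v₀)).ssub (Function.update Term.var v₀ u) = _
    rw [subst_ssub _ (freeFor_atomic hP _ _)]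
    simp only [Term.subst, Function.update_self]
    refine ssub_congr fun w hw => ?_
    rcases eq_or_ne w v with rfl | hwv
    · simp
    · rw [Function.update_of_ne hwv, Function.update_of_ne hwv,
        Function.update_of_ne (by rintro rfl; exact h₀ hw)]

theorem notMem_freeVars_subst {C : Fm L} {x z : ℕ} {t : L.Term ℕ}
    (hz1 : z ∉ freeVars C) (hz2 : tCount z t = 0) : z ∉ freeVars (C.subst x t) := by
  intro hc
  obtain ⟨w, hw, h2⟩ := mem_freeVars_ssub hc
  rcases eq_or_ne w x with rfl | hwx
  · rw [Function.update_self] at h2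
    exact h2 hz2
  · rw [Function.update_of_ne hwx] at h2
    have : w = z := by by_contra hne; simp [tCount, hne] at h2
    exact hz1 (this ▸ hw)

end Fm
namespace Fm
@[simp] theorem subst_falsum (x : ℕ) (t : L.Term ℕ) :
    (falsum : Fm L).subst x t = falsum := rfl
@[simp] theorem subst_equal (x : ℕ) (t : L.Term ℕ) (a b : L.Term ℕ) :
    (equal a b).subst x t
      = equal (a.subst (Function.update Term.var x t)) (b.subst (Function.update Term.var x t)) := rfl
@[simp] theorem subst_and (x : ℕ) (t : L.Term ℕ) (A B : Fm L) :
    (and A B).subst x t = and (A.subst x t) (B.subst x t) := rfl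
@[simp] theorem subst_or (x : ℕ) (t : L.Term ℕ) (A B : Fm L) :
    (or A B).subst x t = or (A.subst x t) (B.subst x t) := rfl
@[simp] theorem subst_imp (x : ℕ) (t : L.Term ℕ) (A B : Fm L) :
    (imp A B).subst x t = imp (A.subst x t) (B.subst x t) := rfl
theorem subst_all (x : ℕ) (t : L.Term ℕ) (y : ℕ) (A : Fm L) :
    (all y A).subst x t
      = all y (A.ssub (Function.update (Function.update Term.var x t) y (Term.var y))) := rfl
theorem subst_ex (x : ℕ) (t : L.Term ℕ) (y : ℕ) (A : Fm L) :
    (ex y A).subst x t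
      = ex y (A.ssub (Function.update (Function.update Term.var x t) y (Term.var y))) := rfl
end Fm

/-- Height-preserving admissibility of substitution in `G3c^=`, for substituted terms
avoiding the bound variables of the sequent. -/
theorem substAdm : ∀ (n : ℕ) (Γ Δ : Multiset (Fm L)) (x : ℕ) (t : L.Term ℕ),
    DerC (ReplFull L) n Γ Δ →
    (∀ C ∈ Γ, ∀ z ∈ Fm.bv C, tCount z t = 0) →
    (∀ C ∈ Δ, ∀ z ∈ Fm.bv C, tCount z t = 0) →
    DerC (ReplFull L) n (Γ.map (Fm.subst x t)) (Δ.map (Fm.subst x t)) := by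
  intro n
  induction n using Nat.strong_induction_on with
  | _ n IH =>
  intro Γ Δ x t d hΓ hΔ
  have mono : ∀ (C : Fm L) (Θ : Multiset (Fm L)),
      (∀ z ∈ Fm.bv C, tCount z t = 0) →
      (∀ C' ∈ Θ, ∀ z ∈ Fm.bv C', tCount z t = 0) →
      (∀ C' ∈ C ::ₘ Θ, ∀ z ∈ Fm.bv C', tCount z t = 0) := by
    intro C Θ h1 h2 C' hC' z hz
    rcases Multiset.mem_cons.mp hC' with rfl | h
    exacts [h1 z hz, h2 C' h z hz]
  cases d with
  | @ax m Γ' Δ' P hP =>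
      simp only [Multiset.map_cons]
      exact DerC.ax (Fm.isAtomic_subst hP x t)
  | @botL m Γ' Δ' =>
      simp only [Multiset.map_cons, Fm.subst_falsum]
      exact DerC.botL
  | @andL m Γ' Δ' A B d' =>
      have D := IH m (Nat.lt_succ_self m) _ _ x t d'
        (mono _ _ (fun z hz => hΓ _ (Multiset.mem_cons_self _ _) z (Or.inl hz))
          (mono _ _ (fun z hz => hΓ _ (Multiset.mem_cons_self _ _) z (Or.inr hz))
            (fun C hC => hΓ _ (Multiset.mem_cons_of_mem hC)))) hΔ
      simp only [Multiset.map_cons, Fm.subst_and] at D ⊢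
      exact DerC.andL D
  | @andR m Γ' Δ' A B d₁ d₂ =>
      have D₁ := IH m (Nat.lt_succ_self m) _ _ x t d₁ hΓ
        (mono _ _ (fun z hz => hΔ _ (Multiset.mem_cons_self _ _) z (Or.inl hz))
          (fun C hC => hΔ _ (Multiset.mem_cons_of_mem hC)))
      have D₂ := IH m (Nat.lt_succ_self m) _ _ x t d₂ hΓ
        (mono _ _ (fun z hz => hΔ _ (Multiset.mem_cons_self _ _) z (Or.inr hz))
          (fun C hC => hΔ _ (Multiset.mem_cons_of_mem hC)))
      simp only [Multiset.map_cons, Fm.subst_and] at D₁ D₂ ⊢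
      exact DerC.andR D₁ D₂
  | @orL m Γ' Δ' A B d₁ d₂ =>
      have D₁ := IH m (Nat.lt_succ_self m) _ _ x t d₁
        (mono _ _ (fun z hz => hΓ _ (Multiset.mem_cons_self _ _) z (Or.inl hz))
          (fun C hC => hΓ _ (Multiset.mem_cons_of_mem hC))) hΔ
      have D₂ := IH m (Nat.lt_succ_self m) _ _ x t d₂
        (mono _ _ (fun z hz => hΓ _ (Multiset.mem_cons_self _ _) z (Or.inr hz))
          (fun C hC => hΓ _ (Multiset.mem_cons_of_mem hC))) hΔ
      simp only [Multiset.map_cons, Fm.subst_or] at D₁ D₂ ⊢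
      exact DerC.orL D₁ D₂
  | @orR m Γ' Δ' A B d' =>
      have D := IH m (Nat.lt_succ_self m) _ _ x t d' hΓ
        (mono _ _ (fun z hz => hΔ _ (Multiset.mem_cons_self _ _) z (Or.inl hz))
          (mono _ _ (fun z hz => hΔ _ (Multiset.mem_cons_self _ _) z (Or.inr hz))
            (fun C hC => hΔ _ (Multiset.mem_cons_of_mem hC))))
      simp only [Multiset.map_cons, Fm.subst_or] at D ⊢
      exact DerC.orR D
  | @impL m Γ' Δ' A B d₁ d₂ =>
      have hΓ' := fun C hC => hΓ C (Multiset.mem_cons_of_mem hC)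
      have hAB := hΓ _ (Multiset.mem_cons_self (Fm.imp A B) Γ')
      have D₁ := IH m (Nat.lt_succ_self m) _ _ x t d₁ hΓ'
        (mono _ _ (fun z hz => hAB z (Or.inl hz)) hΔ)
      have D₂ := IH m (Nat.lt_succ_self m) _ _ x t d₂
        (mono _ _ (fun z hz => hAB z (Or.inr hz)) hΓ') hΔ
      simp only [Multiset.map_cons, Fm.subst_imp] at D₁ D₂ ⊢
      exact DerC.impL D₁ D₂
  | @impR m Γ' Δ' A B d' =>
      have hΔ' := fun C hC => hΔ C (Multiset.mem_cons_of_mem hC)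
      have hAB := hΔ _ (Multiset.mem_cons_self (Fm.imp A B) Δ')
      have D := IH m (Nat.lt_succ_self m) _ _ x t d'
        (mono _ _ (fun z hz => hAB z (Or.inl hz)) hΓ)
        (mono _ _ (fun z hz => hAB z (Or.inr hz)) hΔ')
      simp only [Multiset.map_cons, Fm.subst_imp] at D ⊢
      exact DerC.impR D
  | @allL m Γ' Δ' x' t' A hf d' =>
      have hΓ' := fun C hC => hΓ C (Multiset.mem_cons_of_mem hC)
      have hAll := hΓ _ (Multiset.mem_cons_self (Fm.all x' A) Γ')
      have hx't : tCount x' t = 0 := hAll x' (Or.inl rfl)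
      have hσ : ∀ w, w ≠ x' → tCount x' ((Function.update Term.var x t : ℕ → L.Term ℕ) w) = 0 := by
        intro w hw
        rcases eq_or_ne w x with rfl | hwx
        · rw [Function.update_self]; exact hx't
        · rw [Function.update_of_ne hwx]; simp [tCount, hw]
      have hb : ∀ z ∈ Fm.bv A, ∀ w, w ≠ z →
          tCount z ((Function.update Term.var x t : ℕ → L.Term ℕ) w) = 0 := by
        intro z hz w hw
        rcases eq_or_ne w x with rfl | hwx
        · rw [Function.update_self]; exact hAll z (Or.inr hz)
        · rw [Function.update_of_ne hwx]; simp [tCount, hw]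
      have E2 : (A.subst x' t').subst x t
          = (A.ssub (Function.update (Function.update Term.var x t) x' (Term.var x'))).subst x'
              (t'.subst (Function.update Term.var x t)) := by
        show (A.subst x' t').ssub (Function.update Term.var x t) = _
        rw [Fm.subst_ssub _ hf, Fm.ssub_update_subst _ hσ]
      have hf' := Fm.freeFor_ssub (Function.update Term.var x t) hf hσ hb
      have D := IH m (Nat.lt_succ_self m) _ _ x t d'
        (mono _ _ (by rw [show Fm.bv (A.subst x' t') = Fm.bv A from Fm.bv_ssub A _]
                      exact fun z hz => hAll z (Or.inr hz))
          (mono _ _ hAll hΓ')) hΔ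
      simp only [Multiset.map_cons] at D ⊢
      rw [Fm.subst_all] at D ⊢
      rw [E2] at D
      exact DerC.allL hf' D
  | @exR m Γ' Δ' x' t' A hf d' =>
      have hΔ' := fun C hC => hΔ C (Multiset.mem_cons_of_mem hC)
      have hAll := hΔ _ (Multiset.mem_cons_self (Fm.ex x' A) Δ')
      have hx't : tCount x' t = 0 := hAll x' (Or.inl rfl)
      have hσ : ∀ w, w ≠ x' → tCount x' ((Function.update Term.var x t : ℕ → L.Term ℕ) w) = 0 := by
        intro w hw
        rcases eq_or_ne w x with rfl | hwx
        · rw [Function.update_self]; exact hx't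
        · rw [Function.update_of_ne hwx]; simp [tCount, hw]
      have hb : ∀ z ∈ Fm.bv A, ∀ w, w ≠ z →
          tCount z ((Function.update Term.var x t : ℕ → L.Term ℕ) w) = 0 := by
        intro z hz w hw
        rcases eq_or_ne w x with rfl | hwx
        · rw [Function.update_self]; exact hAll z (Or.inr hz)
        · rw [Function.update_of_ne hwx]; simp [tCount, hw]
      have E2 : (A.subst x' t').subst x t
          = (A.ssub (Function.update (Function.update Term.var x t) x' (Term.var x'))).subst x'
              (t'.subst (Function.update Term.var x t)) := by
        show (A.subst x' t').ssub (Function.update Term.var x t) = _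
        rw [Fm.subst_ssub _ hf, Fm.ssub_update_subst _ hσ]
      have hf' := Fm.freeFor_ssub (Function.update Term.var x t) hf hσ hb
      have D := IH m (Nat.lt_succ_self m) _ _ x t d' hΓ
        (mono _ _ (by rw [show Fm.bv (A.subst x' t') = Fm.bv A from Fm.bv_ssub A _]
                      exact fun z hz => hAll z (Or.inr hz))
          (mono _ _ hAll hΔ'))
      simp only [Multiset.map_cons] at D ⊢
      rw [Fm.subst_ex] at D ⊢
      rw [E2] at D
      exact DerC.exR hf' D
  | @ref m Γ' Δ' t₀ d' =>
      have D := IH m (Nat.lt_succ_self m) _ _ x t d'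
        (mono _ _ (by intro z hz; exact absurd hz (by simp [Fm.bv])) hΓ) hΔ
      simp only [Multiset.map_cons, Fm.subst_equal] at D
      exact DerC.ref _ D
  | @repl m Γp Γc' Δ' h d' =>
      obtain ⟨s, r, v, P, Γ₀, hP, hvs, hvr, hΓp, hΓc⟩ := h
      subst hΓp hΓc
      set σ : ℕ → L.Term ℕ := Function.update Term.var x t with hσdef
      set v₀ : ℕ := Fm.fB P + tB s + tB r + tB t + x + 1 with hv₀def
      have hv₀P : v₀ ∉ Fm.freeVars P := Fm.notMem_freeVars_of_fB_le (by omega)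
      have hv₀s : tCount v₀ s = 0 := tCount_eq_zero_of_tB_le (by omega)
      have hv₀r : tCount v₀ r = 0 := tCount_eq_zero_of_tB_le (by omega)
      have hv₀t : tCount v₀ t = 0 := tCount_eq_zero_of_tB_le (by omega)
      have hv₀x : v₀ ≠ x := by omega
      set P₀ : Fm L := P.subst v (Term.var v₀) with hP₀def
      have hP₀ : P₀.IsAtomic := Fm.isAtomic_subst hP _ _
      set P₁ : Fm L := P₀.subst x t with hP₁def
      have hP₁ : P₁.IsAtomic := Fm.isAtomic_subst hP₀ _ _
      have key : ∀ u : L.Term ℕ, tCount v₀ u = 0 →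
          (P.subst v u).subst x t = P₁.subst v₀ (u.subst σ) := by
        intro u hu
        rw [← Fm.atomic_subst_subst hP hv₀P u]
        have R1 : (P₀.subst v₀ u).subst x t = P₀.ssub (Function.update σ v₀ (u.subst σ)) := by
          show (P₀.subst v₀ u).ssub σ = _
          rw [Fm.subst_ssub _ (Fm.freeFor_atomic hP₀ _ _)]
        have R2 : P₁.subst v₀ (u.subst σ) = P₀.ssub (Function.update σ v₀ (u.subst σ)) := by
          show (P₀.subst x t).ssub (Function.update Term.var v₀ (u.subst σ)) = _
          rw [Fm.subst_ssub _ (Fm.freeFor_atomic hP₀ _ _)]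
          congr 1
          rw [Fm.tsubst_cancel hv₀t, hσdef]
          exact Function.update_comm hv₀x _ _ _
        rw [R1, R2]
      have cvs : tCount v₀ (s.subst σ) = 0 := by
        refine tCount_subst_zero fun w hw => ?_
        rcases eq_or_ne w x with rfl | hwx
        · rw [hσdef, Function.update_self]; exact hv₀t
        · rw [hσdef, Function.update_of_ne hwx]
          simp only [tCount]
          rw [if_neg]; rintro rfl; exact hw hv₀s
      have cvr : tCount v₀ (r.subst σ) = 0 := by
        refine tCount_subst_zero fun w hw => ?_
        rcases eq_or_ne w x with rfl | hwx
        · rw [hσdef, Function.update_self]; exact hv₀t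
        · rw [hσdef, Function.update_of_ne hwx]
          simp only [tCount]
          rw [if_neg]; rintro rfl; exact hw hv₀r
      have hΓ₀ := fun C hC => hΓ C (Multiset.mem_cons_of_mem (Multiset.mem_cons_of_mem hC))
      have hbvP : ∀ (u : L.Term ℕ), ∀ z ∈ Fm.bv (P.subst v u), tCount z t = 0 := by
        intro u z hz
        rw [show Fm.bv (P.subst v u) = Fm.bv P from Fm.bv_ssub P _, Fm.bv_atomic hP] at hz
        exact absurd hz (Set.notMem_empty z)
      have D := IH m (Nat.lt_succ_self m) _ _ x t d'
        (mono _ _ (by intro z hz; exact absurd hz (by simp [Fm.bv])) 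
          (mono _ _ (hbvP s) (mono _ _ (hbvP r) hΓ₀))) hΔ
      simp only [Multiset.map_cons, Fm.subst_equal] at D ⊢
      rw [key s hv₀s, key r hv₀r] at D
      rw [key s hv₀s]
      exact DerC.repl ⟨s.subst σ, r.subst σ, v₀, P₁, Γ₀.map (Fm.subst x t), hP₁, cvs, cvr,
        rfl, rfl⟩ D
  | @allR m Γ Δ' x' u A hf hy hG hD d' =>
      set σ : ℕ → L.Term ℕ := Function.update Term.var x t with hσdef
      have hAll := hΔ _ (Multiset.mem_cons_self (Fm.all x' A) Δ')
      have hΔ' := fun C hC => hΔ C (Multiset.mem_cons_of_mem hC)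
      set z : ℕ := mB Γ + mB (A.subst x' (Term.var u) ::ₘ Δ') + Fm.fB (Fm.all x' A)
        + tB t + x + u + 1 with hzdef
      have hzΓ : ∀ C ∈ Γ, Fm.fB C ≤ z := fun C hC => le_trans (fB_le_mB hC) (by omega)
      have hzΔp : ∀ C ∈ (A.subst x' (Term.var u) ::ₘ Δ'), Fm.fB C ≤ z :=
        fun C hC => le_trans (fB_le_mB hC) (by omega)
      have hzA : Fm.fB (Fm.all x' A) ≤ z := by omega
      have hzt : tCount z t = 0 := tCount_eq_zero_of_tB_le (by omega)
      have hzx : z ≠ x := by omega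
      have hzbvA : z ∉ Fm.bv A := fun hc => Fm.notMem_bv_of_fB_le hzA (Or.inr hc)
      have hzfvAll : z ∉ Fm.freeVars (Fm.all x' A) := Fm.notMem_freeVars_of_fB_le hzA
      have varz : ∀ (C : Fm L), Fm.fB C ≤ z → ∀ zb ∈ Fm.bv C,
          tCount zb (Term.var z : L.Term ℕ) = 0 := by
        intro C hC zb hzb
        have hne : z ≠ zb := by rintro rfl; exact Fm.notMem_bv_of_fB_le hC hzb
        simp [tCount, hne]
      have hu' : u ∉ Fm.freeVars A ∨ u = x' := by
        rcases eq_or_ne u x' with h | h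
        · exact Or.inr h
        · exact Or.inl fun hc => hy ⟨hc, h⟩
      have D₁ := IH m (Nat.lt_succ_self m) Γ (A.subst x' (Term.var u) ::ₘ Δ') u
        (Term.var z) d' (fun C hC => varz C (hzΓ C hC)) (fun C hC => varz C (hzΔp C hC))
      rw [Fm.map_subst_of_not_free _ hG, Multiset.map_cons, Fm.map_subst_of_not_free _ hD,
        Fm.subst_subst_var z hf hu'] at D₁
      have D₂ := IH m (Nat.lt_succ_self m) Γ (A.subst x' (Term.var z) ::ₘ Δ') x t D₁
        hΓ (mono _ _ (by rw [show Fm.bv (A.subst x' (Term.var z)) = Fm.bv A from Fm.bv_ssub A _]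
                         exact fun zb hzb => hAll zb (Or.inr hzb)) hΔ')
      have hσx' : ∀ w, w ≠ x' → tCount x' (σ w) = 0 := by
        intro w hw
        rcases eq_or_ne w x with rfl | hwx
        · rw [hσdef, Function.update_self]; exact hAll x' (Or.inl rfl)
        · rw [hσdef, Function.update_of_ne hwx]; simp [tCount, hw]
      have hfz : Fm.freeFor (Term.var z : L.Term ℕ) x' A := Fm.freeFor_var_of_not_bv x' hzbvA
      have e5 : (Term.var z : L.Term ℕ).subst σ = Term.var z := by
        rw [hσdef]
        show Function.update Term.var x t z = _
        rw [Function.update_of_ne hzx]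
      have E4 : (A.subst x' (Term.var z)).subst x t
          = (A.ssub (Function.update σ x' (Term.var x'))).subst x' (Term.var z) := by
        show (A.subst x' (Term.var z)).ssub σ = _
        rw [Fm.subst_ssub _ hfz, Fm.ssub_update_subst _ hσx', e5]
      simp only [Multiset.map_cons] at D₂ ⊢
      rw [E4] at D₂
      rw [Fm.subst_all]
      refine DerC.allR (y := z) ?_ ?_ ?_ ?_ D₂
      · exact Fm.freeFor_var_of_not_bv x'
          (by rw [show Fm.bv (A.ssub _) = Fm.bv A from Fm.bv_ssub A _]; exact hzbvA)
      · intro hc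
        obtain ⟨w, hw, h2⟩ := Fm.mem_freeVars_ssub (A := Fm.all x' A) (σ := σ) hc
        rw [hσdef] at h2
        rcases eq_or_ne w x with rfl | hwx
        · rw [Function.update_self] at h2; exact h2 hzt
        · rw [Function.update_of_ne hwx] at h2
          have : w = z := by by_contra hne; simp [tCount, hne] at h2
          exact hzfvAll (this ▸ hw)
      · intro C hC
        obtain ⟨C₀, hC₀, rfl⟩ := Multiset.mem_map.mp hC
        exact Fm.notMem_freeVars_subst (Fm.notMem_freeVars_of_fB_le (hzΓ C₀ hC₀)) hzt
      · intro C hC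
        obtain ⟨C₀, hC₀, rfl⟩ := Multiset.mem_map.mp hC
        exact Fm.notMem_freeVars_subst
          (Fm.notMem_freeVars_of_fB_le (hzΔp C₀ (Multiset.mem_cons_of_mem hC₀))) hzt
  | @exL m Γ' Δ x' u A hf hy hG hD d' =>
      set σ : ℕ → L.Term ℕ := Function.update Term.var x t with hσdef
      have hAll := hΓ _ (Multiset.mem_cons_self (Fm.ex x' A) Γ')
      have hΓ' := fun C hC => hΓ C (Multiset.mem_cons_of_mem hC)
      set z : ℕ := mB (A.subst x' (Term.var u) ::ₘ Γ') + mB Δ + Fm.fB (Fm.ex x' A)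
        + tB t + x + u + 1 with hzdef
      have hzΓp : ∀ C ∈ (A.subst x' (Term.var u) ::ₘ Γ'), Fm.fB C ≤ z :=
        fun C hC => le_trans (fB_le_mB hC) (by omega)
      have hzΔ : ∀ C ∈ Δ, Fm.fB C ≤ z := fun C hC => le_trans (fB_le_mB hC) (by omega)
      have hzA : Fm.fB (Fm.ex x' A) ≤ z := by omega
      have hzt : tCount z t = 0 := tCount_eq_zero_of_tB_le (by omega)
      have hzx : z ≠ x := by omega
      have hzbvA : z ∉ Fm.bv A := fun hc => Fm.notMem_bv_of_fB_le hzA (Or.inr hc)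
      have hzfvAll : z ∉ Fm.freeVars (Fm.ex x' A) := Fm.notMem_freeVars_of_fB_le hzA
      have varz : ∀ (C : Fm L), Fm.fB C ≤ z → ∀ zb ∈ Fm.bv C,
          tCount zb (Term.var z : L.Term ℕ) = 0 := by
        intro C hC zb hzb
        have hne : z ≠ zb := by rintro rfl; exact Fm.notMem_bv_of_fB_le hC hzb
        simp [tCount, hne]
      have hu' : u ∉ Fm.freeVars A ∨ u = x' := by
        rcases eq_or_ne u x' with h | h
        · exact Or.inr h
        · exact Or.inl fun hc => hy ⟨hc, h⟩
      have D₁ := IH m (Nat.lt_succ_self m) (A.subst x' (Term.var u) ::ₘ Γ') Δ u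
        (Term.var z) d' (fun C hC => varz C (hzΓp C hC)) (fun C hC => varz C (hzΔ C hC))
      rw [Multiset.map_cons, Fm.map_subst_of_not_free _ hG, Fm.map_subst_of_not_free _ hD,
        Fm.subst_subst_var z hf hu'] at D₁
      have D₂ := IH m (Nat.lt_succ_self m) (A.subst x' (Term.var z) ::ₘ Γ') Δ x t D₁
        (mono _ _ (by rw [show Fm.bv (A.subst x' (Term.var z)) = Fm.bv A from Fm.bv_ssub A _]
                      exact fun zb hzb => hAll zb (Or.inr hzb)) hΓ') hΔ
      have hσx' : ∀ w, w ≠ x' → tCount x' (σ w) = 0 := by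
        intro w hw
        rcases eq_or_ne w x with rfl | hwx
        · rw [hσdef, Function.update_self]; exact hAll x' (Or.inl rfl)
        · rw [hσdef, Function.update_of_ne hwx]; simp [tCount, hw]
      have hfz : Fm.freeFor (Term.var z : L.Term ℕ) x' A := Fm.freeFor_var_of_not_bv x' hzbvA
      have e5 : (Term.var z : L.Term ℕ).subst σ = Term.var z := by
        rw [hσdef]
        show Function.update Term.var x t z = _
        rw [Function.update_of_ne hzx]
      have E4 : (A.subst x' (Term.var z)).subst x t
          = (A.ssub (Function.update σ x' (Term.var x'))).subst x' (Term.var z) := by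
        show (A.subst x' (Term.var z)).ssub σ = _
        rw [Fm.subst_ssub _ hfz, Fm.ssub_update_subst _ hσx', e5]
      simp only [Multiset.map_cons] at D₂ ⊢
      rw [E4] at D₂
      rw [Fm.subst_ex]
      refine DerC.exL (y := z) ?_ ?_ ?_ ?_ D₂
      · exact Fm.freeFor_var_of_not_bv x'
          (by rw [show Fm.bv (A.ssub _) = Fm.bv A from Fm.bv_ssub A _]; exact hzbvA)
      · intro hc
        obtain ⟨w, hw, h2⟩ := Fm.mem_freeVars_ssub (A := Fm.ex x' A) (σ := σ) hc
        rw [hσdef] at h2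
        rcases eq_or_ne w x with rfl | hwx
        · rw [Function.update_self] at h2; exact h2 hzt
        · rw [Function.update_of_ne hwx] at h2
          have : w = z := by by_contra hne; simp [tCount, hne] at h2
          exact hzfvAll (this ▸ hw)
      · intro C hC
        obtain ⟨C₀, hC₀, rfl⟩ := Multiset.mem_map.mp hC
        exact Fm.notMem_freeVars_subst
          (Fm.notMem_freeVars_of_fB_le (hzΓp C₀ (Multiset.mem_cons_of_mem hC₀))) hzt
      · intro C hC
        obtain ⟨C₀, hC₀, rfl⟩ := Multiset.mem_map.mp hC
        exact Fm.notMem_freeVars_subst (Fm.notMem_freeVars_of_fB_le (hzΔ C₀ hC₀)) hzt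
/-- Admissibility of left weakening in `G3c^=` (height-preserving). -/
theorem weakAdm : ∀ (n : ℕ) (Γ Δ : Multiset (Fm L)) (A₀ : Fm L),
    DerC (ReplFull L) n Γ Δ → DerC (ReplFull L) n (A₀ ::ₘ Γ) Δ := by
  intro n
  induction n using Nat.strong_induction_on with
  | _ n IH =>
  intro Γ Δ A₀ d
  cases d with
  | @ax m Γ' Δ' P hP =>
      rw [Multiset.cons_swap]
      exact DerC.ax hP
  | @botL m Γ' Δ' =>
      rw [Multiset.cons_swap]
      exact DerC.botL
  | @andL m Γ' Δ' A B d' =>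
      rw [Multiset.cons_swap]
      refine DerC.andL ?_
      have D := IH m (Nat.lt_succ_self m) _ _ A₀ d'
      rwa [Multiset.cons_swap A₀ A, Multiset.cons_swap A₀ B] at D
  | @andR m Γ' Δ' A B d₁ d₂ =>
      exact DerC.andR (IH m (Nat.lt_succ_self m) _ _ A₀ d₁) (IH m (Nat.lt_succ_self m) _ _ A₀ d₂)
  | @orL m Γ' Δ' A B d₁ d₂ =>
      rw [Multiset.cons_swap]
      have D₁ := IH m (Nat.lt_succ_self m) _ _ A₀ d₁
      have D₂ := IH m (Nat.lt_succ_self m) _ _ A₀ d₂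
      rw [Multiset.cons_swap A₀ A] at D₁
      rw [Multiset.cons_swap A₀ B] at D₂
      exact DerC.orL D₁ D₂
  | @orR m Γ' Δ' A B d' =>
      exact DerC.orR (IH m (Nat.lt_succ_self m) _ _ A₀ d')
  | @impL m Γ' Δ' A B d₁ d₂ =>
      rw [Multiset.cons_swap]
      have D₁ := IH m (Nat.lt_succ_self m) _ _ A₀ d₁
      have D₂ := IH m (Nat.lt_succ_self m) _ _ A₀ d₂
      rw [Multiset.cons_swap A₀ B] at D₂
      exact DerC.impL D₁ D₂
  | @impR m Γ' Δ' A B d' =>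
      have D := IH m (Nat.lt_succ_self m) _ _ A₀ d'
      rw [Multiset.cons_swap A₀ A] at D
      exact DerC.impR D
  | @allL m Γ' Δ' x' t' A hf d' =>
      rw [Multiset.cons_swap]
      have D := IH m (Nat.lt_succ_self m) _ _ A₀ d'
      rw [Multiset.cons_swap A₀ (A.subst x' t'), Multiset.cons_swap A₀ (Fm.all x' A)] at D
      exact DerC.allL hf D
  | @exR m Γ' Δ' x' t' A hf d' =>
      exact DerC.exR hf (IH m (Nat.lt_succ_self m) _ _ A₀ d')
  | @ref m Γ' Δ' t₀ d' =>
      have D := IH m (Nat.lt_succ_self m) _ _ A₀ d'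
      rw [Multiset.cons_swap A₀ (Fm.equal t₀ t₀)] at D
      exact DerC.ref t₀ D
  | @repl m Γp Γc' Δ' h d' =>
      obtain ⟨s, r, v, P, Γ₀, hP, hvs, hvr, hΓp, hΓc⟩ := h
      subst hΓp hΓc
      have D := IH m (Nat.lt_succ_self m) _ _ A₀ d'
      rw [Multiset.cons_swap A₀ (Fm.equal s r), Multiset.cons_swap A₀ (P.subst v s),
        Multiset.cons_swap A₀ (P.subst v r)] at D
      rw [Multiset.cons_swap A₀ (Fm.equal s r), Multiset.cons_swap A₀ (P.subst v s)]
      exact DerC.repl ⟨s, r, v, P, A₀ ::ₘ Γ₀, hP, hvs, hvr, rfl, rfl⟩ D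
  | @allR m _ Δ' x' u A hf hy hG hD d' =>
      set z : ℕ := mB Γ + mB (A.subst x' (Term.var u) ::ₘ Δ') + Fm.fB (Fm.all x' A)
        + Fm.fB A₀ + u + 1 with hzdef
      have hzΓ : ∀ C ∈ Γ, Fm.fB C ≤ z := fun C hC => le_trans (fB_le_mB hC) (by omega)
      have hzΔp : ∀ C ∈ (A.subst x' (Term.var u) ::ₘ Δ'), Fm.fB C ≤ z :=
        fun C hC => le_trans (fB_le_mB hC) (by omega)
      have hzA : Fm.fB (Fm.all x' A) ≤ z := by omega
      have hzbvA : z ∉ Fm.bv A := fun hc => Fm.notMem_bv_of_fB_le hzA (Or.inr hc)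
      have varz : ∀ (C : Fm L), Fm.fB C ≤ z → ∀ zb ∈ Fm.bv C,
          tCount zb (Term.var z : L.Term ℕ) = 0 := by
        intro C hC zb hzb
        have hne : z ≠ zb := by rintro rfl; exact Fm.notMem_bv_of_fB_le hC hzb
        simp [tCount, hne]
      have hu' : u ∉ Fm.freeVars A ∨ u = x' := by
        rcases eq_or_ne u x' with h | h
        · exact Or.inr h
        · exact Or.inl fun hc => hy ⟨hc, h⟩
      have D₁ := substAdm m Γ (A.subst x' (Term.var u) ::ₘ Δ') u (Term.var z) d'
        (fun C hC => varz C (hzΓ C hC)) (fun C hC => varz C (hzΔp C hC))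
      rw [Fm.map_subst_of_not_free _ hG, Multiset.map_cons, Fm.map_subst_of_not_free _ hD,
        Fm.subst_subst_var z hf hu'] at D₁
      have D₂ := IH m (Nat.lt_succ_self m) _ _ A₀ D₁
      refine DerC.allR (y := z) (Fm.freeFor_var_of_not_bv x' hzbvA)
        (Fm.notMem_freeVars_of_fB_le hzA) ?_ ?_ D₂
      · intro C hC
        rcases Multiset.mem_cons.mp hC with rfl | hC
        · exact Fm.notMem_freeVars_of_fB_le (by omega)
        · exact Fm.notMem_freeVars_of_fB_le (hzΓ C hC)
      · intro C hC
        exact Fm.notMem_freeVars_of_fB_le (hzΔp C (Multiset.mem_cons_of_mem hC))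
  | @exL m Γ' _ x' u A hf hy hG hD d' =>
      set z : ℕ := mB (A.subst x' (Term.var u) ::ₘ Γ') + mB Δ + Fm.fB (Fm.ex x' A)
        + Fm.fB A₀ + u + 1 with hzdef
      have hzΓp : ∀ C ∈ (A.subst x' (Term.var u) ::ₘ Γ'), Fm.fB C ≤ z :=
        fun C hC => le_trans (fB_le_mB hC) (by omega)
      have hzΔ : ∀ C ∈ Δ, Fm.fB C ≤ z := fun C hC => le_trans (fB_le_mB hC) (by omega)
      have hzA : Fm.fB (Fm.ex x' A) ≤ z := by omega
      have hzbvA : z ∉ Fm.bv A := fun hc => Fm.notMem_bv_of_fB_le hzA (Or.inr hc)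
      have varz : ∀ (C : Fm L), Fm.fB C ≤ z → ∀ zb ∈ Fm.bv C,
          tCount zb (Term.var z : L.Term ℕ) = 0 := by
        intro C hC zb hzb
        have hne : z ≠ zb := by rintro rfl; exact Fm.notMem_bv_of_fB_le hC hzb
        simp [tCount, hne]
      have hu' : u ∉ Fm.freeVars A ∨ u = x' := by
        rcases eq_or_ne u x' with h | h
        · exact Or.inr h
        · exact Or.inl fun hc => hy ⟨hc, h⟩
      have D₁ := substAdm m (A.subst x' (Term.var u) ::ₘ Γ') Δ u (Term.var z) d'
        (fun C hC => varz C (hzΓp C hC)) (fun C hC => varz C (hzΔ C hC))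
      rw [Multiset.map_cons, Fm.map_subst_of_not_free _ hG, Fm.map_subst_of_not_free _ hD,
        Fm.subst_subst_var z hf hu'] at D₁
      have D₂ := IH m (Nat.lt_succ_self m) _ _ A₀ D₁
      rw [Multiset.cons_swap A₀ (A.subst x' (Term.var z))] at D₂
      rw [Multiset.cons_swap]
      refine DerC.exL (y := z) (Fm.freeFor_var_of_not_bv x' hzbvA)
        (Fm.notMem_freeVars_of_fB_le hzA) ?_ ?_ D₂
      · intro C hC
        rcases Multiset.mem_cons.mp hC with rfl | hC
        · exact Fm.notMem_freeVars_of_fB_le (by omega)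
        · exact Fm.notMem_freeVars_of_fB_le (hzΓp C (Multiset.mem_cons_of_mem hC))
      · intro C hC
        exact Fm.notMem_freeVars_of_fB_le (hzΔ C hC)
/-- The rule Repl⁻ is admissible in `G3c^=`: for atomic `P` and `v` not occurring in
`s`, `r`, if `s = r, P[v/r], Γ ⇒ Δ` is derivable then so is `s = r, P[v/s], Γ ⇒ Δ`. -/
theorem replMinus_admissible_G3cEq (L : FirstOrder.Language.{u, v})
    (P : Fm L) (hP : P.IsAtomic) (v : ℕ)
    (s r : L.Term ℕ) (hs : tCount v s = 0) (hr : tCount v r = 0)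
    (Γ Δ : Multiset (Fm L))
    (hd : ∃ n, DerC (ReplFull L) n (Fm.equal s r ::ₘ P.subst v r ::ₘ Γ) Δ) :
    ∃ n, DerC (ReplFull L) n (Fm.equal s r ::ₘ P.subst v s ::ₘ Γ) Δ := by
  obtain ⟨n, d⟩ := hd
  have W := weakAdm n _ Δ (P.subst v s) d
  rw [Multiset.cons_swap (P.subst v s) (Fm.equal s r)] at W
  exact ⟨n + 1, DerC.repl ⟨s, r, v, P, Γ, hP, hs, hr, rfl, rfl⟩ W⟩
end

section
/- Equivalence of G3c^= and G3c^=⁻: a sequent Γ ⇒ Δ is derivable in G3c^= if and only if it is derivable in G3c^=⁻. -/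
open FirstOrder Language Multiset

universe u v

variable {L : FirstOrder.Language.{u, v}}

namespace G3Equiv

open Fm

variable {L : FirstOrder.Language.{u, v}}

/-! ### Term-level lemmas -/

lemma tCount_subst_ne {w v : ℕ} (hw : w ≠ v) (s : L.Term ℕ) (t : L.Term ℕ) :
    tCount w (t.subst (Function.update Term.var v s)) =
      tCount w t + tCount v t * tCount w s := by
  induction t with
  | var a =>
    by_cases hav : a = v
    · subst hav
      simp [tCount, Function.update_self, if_neg (Ne.symm hw), if_pos rfl]
    · simp only [Term.subst, Function.update_of_ne hav, tCount, if_neg hav]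
      by_cases haw : a = w
      · simp [tCount, if_pos haw]
      · simp [tCount, if_neg haw]
  | func f ts ih =>
    simp only [Term.subst, tCount, Finset.sum_add_distrib, ← Finset.sum_mul]
    rw [Finset.sum_congr rfl fun i _ => ih i]
    rw [Finset.sum_add_distrib, ← Finset.sum_mul]

lemma tCount_subst_self {v : ℕ} {s : L.Term ℕ} (hs : tCount v s = 0) (t : L.Term ℕ) :
    tCount v (t.subst (Function.update Term.var v s)) = 0 := by
  induction t with
  | var a =>
    by_cases hav : a = v
    · subst hav; simp [Function.update_self, hs]
    · simp [Function.update_of_ne hav, tCount, if_neg hav]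
  | func f ts ih =>
    simp only [Term.subst, tCount]
    exact Finset.sum_eq_zero fun i _ => ih i

lemma subst_eq_of_tCount_eq_zero {v : ℕ} {t : L.Term ℕ} (h : tCount v t = 0)
    (u : L.Term ℕ) : t.subst (Function.update Term.var v u) = t := by
  induction t with
  | var a =>
    have hav : a ≠ v := by
      intro hav; subst hav; simp [tCount] at h
    simp [Function.update_of_ne hav]
  | func f ts ih =>
    simp only [tCount] at h
    rw [Finset.sum_eq_zero_iff] at h
    simp only [Term.subst]
    exact congrArg _ (funext fun i => ih i (h i (Finset.mem_univ i)))

/-- a bound above all variables of a term -/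
def tBnd : L.Term ℕ → ℕ
  | .var w => w + 1
  | .func _ ts => Finset.univ.sup fun i => tBnd (ts i)

lemma tCount_eq_zero_of_tBnd_le {t : L.Term ℕ} {v : ℕ} (h : tBnd t ≤ v) :
    tCount v t = 0 := by
  induction t with
  | var a =>
    simp only [tBnd] at h
    simp [tCount, if_neg (by omega : a ≠ v)]
  | func f ts ih =>
    simp only [tBnd] at h
    simp only [tCount]
    exact Finset.sum_eq_zero fun i _ => ih i (le_trans (Finset.le_sup (f := fun i => tBnd (ts i)) (Finset.mem_univ i)) h)


/-! ### Generalities about the calculi -/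

lemma mono {rp : Multiset (Fm L) → Multiset (Fm L) → Prop} :
    ∀ {n : ℕ} {Γ Δ : Multiset (Fm L)}, DerC rp n Γ Δ → ∀ {m : ℕ}, n ≤ m → DerC rp m Γ Δ := by
  intro n Γ Δ D
  induction D with
  | ax hP => intro m _; exact DerC.ax hP
  | botL => intro m _; exact DerC.botL
  | andL _ ih => intro m hm
                 obtain ⟨m, rfl⟩ : ∃ k, m = k + 1 := ⟨m - 1, by omega⟩
                 exact DerC.andL (ih (by omega))
  | andR _ _ ih₁ ih₂ => intro m hm
                        obtain ⟨m, rfl⟩ : ∃ k, m = k + 1 := ⟨m - 1, by omega⟩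
                        exact DerC.andR (ih₁ (by omega)) (ih₂ (by omega))
  | orL _ _ ih₁ ih₂ => intro m hm
                       obtain ⟨m, rfl⟩ : ∃ k, m = k + 1 := ⟨m - 1, by omega⟩
                       exact DerC.orL (ih₁ (by omega)) (ih₂ (by omega))
  | orR _ ih => intro m hm
                obtain ⟨m, rfl⟩ : ∃ k, m = k + 1 := ⟨m - 1, by omega⟩
                exact DerC.orR (ih (by omega))
  | impL _ _ ih₁ ih₂ => intro m hm
                        obtain ⟨m, rfl⟩ : ∃ k, m = k + 1 := ⟨m - 1, by omega⟩
                        exact DerC.impL (ih₁ (by omega)) (ih₂ (by omega))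
  | impR _ ih => intro m hm
                 obtain ⟨m, rfl⟩ : ∃ k, m = k + 1 := ⟨m - 1, by omega⟩
                 exact DerC.impR (ih (by omega))
  | allL hf _ ih => intro m hm
                    obtain ⟨m, rfl⟩ : ∃ k, m = k + 1 := ⟨m - 1, by omega⟩
                    exact DerC.allL hf (ih (by omega))
  | allR hf hy hΓ hΔ _ ih => intro m hm
                             obtain ⟨m, rfl⟩ : ∃ k, m = k + 1 := ⟨m - 1, by omega⟩
                             exact DerC.allR hf hy hΓ hΔ (ih (by omega))
  | exL hf hy hΓ hΔ _ ih => intro m hm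
                            obtain ⟨m, rfl⟩ : ∃ k, m = k + 1 := ⟨m - 1, by omega⟩
                            exact DerC.exL hf hy hΓ hΔ (ih (by omega))
  | exR hf _ ih => intro m hm
                   obtain ⟨m, rfl⟩ : ∃ k, m = k + 1 := ⟨m - 1, by omega⟩
                   exact DerC.exR hf (ih (by omega))
  | ref t _ ih => intro m hm
                  obtain ⟨m, rfl⟩ : ∃ k, m = k + 1 := ⟨m - 1, by omega⟩
                  exact DerC.ref t (ih (by omega))
  | repl h _ ih => intro m hm
                   obtain ⟨m, rfl⟩ : ∃ k, m = k + 1 := ⟨m - 1, by omega⟩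
                   exact DerC.repl h (ih (by omega))

/-- Derivability (at some height). -/
def Der (rp : Multiset (Fm L) → Multiset (Fm L) → Prop) (Γ Δ : Multiset (Fm L)) : Prop :=
  ∃ n, DerC rp n Γ Δ

lemma Der.castL {rp} {Γ Γ' Δ : Multiset (Fm L)} (h : Γ = Γ') (d : Der rp Γ Δ) :
    Der rp Γ' Δ := h ▸ d

/-! ### Atomic formulas and substitution -/

lemma subst_equal (v : ℕ) (t a b : L.Term ℕ) :
    (Fm.equal a b).subst v t =
      Fm.equal (a.subst (Function.update Term.var v t)) (b.subst (Function.update Term.var v t)) := rfl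

lemma subst_rel (v : ℕ) (t : L.Term ℕ) {l : ℕ} (R : L.Relations l) (ts : Fin l → L.Term ℕ) :
    (Fm.rel R ts).subst v t = Fm.rel R fun i => (ts i).subst (Function.update Term.var v t) := rfl

lemma atomic_subst {Q : Fm L} (h : Q.IsAtomic) (v : ℕ) (t : L.Term ℕ) :
    (Q.subst v t).IsAtomic := by
  cases h with
  | equal a b => rw [subst_equal]; exact IsAtomic.equal _ _
  | rel R ts => rw [subst_rel]; exact IsAtomic.rel _ _

def IsEqF (C : Fm L) : Prop := ∃ a b, C = Fm.equal a b

lemma isEqF_subst {Q : Fm L} (hQ : Q.IsAtomic) {v : ℕ} {t u : L.Term ℕ}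
    (h : IsEqF (Q.subst v t)) : IsEqF (Q.subst v u) := by
  cases hQ with
  | equal a b => exact ⟨_, _, subst_equal v u a b⟩
  | rel R ts => rw [subst_rel] at h; obtain ⟨a, b, hab⟩ := h; exact absurd hab (fun h => by cases h)

/-! ### Reachability -/

/-- `Reach Θ C` : the atomic formula `C` can be obtained from members of `Θ` by
replacements along equations in `Θ` (in both directions) and trivial equations. -/
inductive Reach (Θ : Multiset (Fm L)) : Fm L → Prop where
  | mem {C : Fm L} : C ∈ Θ → C.IsAtomic → Reach Θ C
  | refl (t : L.Term ℕ) : Reach Θ (Fm.equal t t)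
  | fwd {s r : L.Term ℕ} {v : ℕ} {Q : Fm L} : Q.IsAtomic → tCount v s = 0 → tCount v r = 0 →
      Reach Θ (Q.subst v s) → Reach Θ (Fm.equal s r) → Reach Θ (Q.subst v r)
  | bwd {s r : L.Term ℕ} {v : ℕ} {Q : Fm L} : Q.IsAtomic → tCount v s = 0 → tCount v r = 0 →
      Reach Θ (Q.subst v r) → Reach Θ (Fm.equal s r) → Reach Θ (Q.subst v s)

lemma Reach.atomic {Θ : Multiset (Fm L)} {C : Fm L} (h : Reach Θ C) : C.IsAtomic := by
  induction h with
  | mem _ h => exact h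
  | refl t => exact IsAtomic.equal t t
  | fwd hQ _ _ _ _ _ _ => exact atomic_subst hQ _ _
  | bwd hQ _ _ _ _ _ _ => exact atomic_subst hQ _ _

lemma Reach.mono {Θ Θ' : Multiset (Fm L)} (hsub : ∀ D : Fm L, D.IsAtomic → D ∈ Θ → D ∈ Θ')
    {C : Fm L} (h : Reach Θ C) : Reach Θ' C := by
  induction h with
  | mem hm ha => exact Reach.mem (hsub _ ha hm) ha
  | refl t => exact Reach.refl t
  | fwd hQ hs hr _ _ ih₁ ih₂ => exact Reach.fwd hQ hs hr ih₁ ih₂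
  | bwd hQ hs hr _ _ ih₁ ih₂ => exact Reach.bwd hQ hs hr ih₁ ih₂

/-! ### Multiset helpers -/

lemma split_cons {X : Fm L} {Γ Θ Φ : Multiset (Fm L)} (hΨ : X ::ₘ Γ = Θ + Φ)
    (hX : X ∈ Θ) : ∃ Θ₁, Θ = X ::ₘ Θ₁ ∧ Γ = Θ₁ + Φ := by
  obtain ⟨Θ₁, rfl⟩ := Multiset.exists_cons_of_mem hX
  rw [Multiset.cons_add] at hΨ
  exact ⟨Θ₁, rfl, (Multiset.cons_inj_right _).mp hΨ⟩


/-! ### Basic derivable steps -/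

lemma replMinusStep {s r : L.Term ℕ} {v : ℕ} {Q : Fm L} (hQ : Q.IsAtomic)
    (hs : tCount v s = 0) (hr : tCount v r = 0) {Γ Δ : Multiset (Fm L)}
    (d : Der (ReplMinus L) (Fm.equal s r ::ₘ Q.subst v r ::ₘ Γ) Δ) :
    Der (ReplMinus L) (Fm.equal s r ::ₘ Q.subst v s ::ₘ Γ) Δ := by
  obtain ⟨n, dn⟩ := d
  exact ⟨n + 1, DerC.repl ⟨s, r, v, Q, Γ, hQ, hs, hr, rfl, rfl⟩ dn⟩

lemma refStep {rp} {t : L.Term ℕ} {Γ Δ : Multiset (Fm L)}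
    (d : Der rp (Fm.equal t t ::ₘ Γ) Δ) : Der rp Γ Δ := by
  obtain ⟨n, dn⟩ := d
  exact ⟨n + 1, DerC.ref t dn⟩

/-- duplicate an equation: from `s=r, s=r, Γ ⊢` conclude `s=r, Γ ⊢`. -/
lemma dupEq {a b : L.Term ℕ} {Γ Δ : Multiset (Fm L)}
    (d : Der (ReplMinus L) (Fm.equal a b ::ₘ Fm.equal a b ::ₘ Γ) Δ) :
    Der (ReplMinus L) (Fm.equal a b ::ₘ Γ) Δ := by
  set v₀ := max (tBnd a) (tBnd b) with hv₀
  have ha : tCount v₀ a = 0 := tCount_eq_zero_of_tBnd_le (le_max_left _ _)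
  have hb : tCount v₀ b = 0 := tCount_eq_zero_of_tBnd_le (le_max_right _ _)
  have e₁ : (Fm.equal a (Term.var v₀)).subst v₀ b = Fm.equal a b := by
    rw [subst_equal, subst_eq_of_tCount_eq_zero ha]
    simp [Function.update_self]
  have e₂ : (Fm.equal a (Term.var v₀)).subst v₀ a = Fm.equal a a := by
    rw [subst_equal, subst_eq_of_tCount_eq_zero ha]
    simp [Function.update_self]
  have step : Der (ReplMinus L)
      (Fm.equal a b ::ₘ Fm.equal a a ::ₘ Γ) Δ := by
    have := replMinusStep (s := a) (r := b) (v := v₀) (Q := Fm.equal a (Term.var v₀))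
      (IsAtomic.equal _ _) ha hb (Γ := Γ) (Δ := Δ) ?_
    · rwa [e₂] at this
    · rwa [e₁]
  exact refStep (Der.castL (Multiset.cons_swap _ _ _) step)

/-- turn an equation `s=r` in the antecedent into an additional copy of `r=s`. -/
lemma symEq {a b : L.Term ℕ} {Γ Δ : Multiset (Fm L)}
    (d : Der (ReplMinus L) (Fm.equal b a ::ₘ Fm.equal a b ::ₘ Γ) Δ) :
    Der (ReplMinus L) (Fm.equal a b ::ₘ Γ) Δ := by
  set v₀ := max (tBnd a) (tBnd b) with hv₀
  have ha : tCount v₀ a = 0 := tCount_eq_zero_of_tBnd_le (le_max_left _ _)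
  have hb : tCount v₀ b = 0 := tCount_eq_zero_of_tBnd_le (le_max_right _ _)
  have e₁ : (Fm.equal (Term.var v₀) a).subst v₀ b = Fm.equal b a := by
    rw [subst_equal, subst_eq_of_tCount_eq_zero ha]
    simp [Function.update_self]
  have e₂ : (Fm.equal (Term.var v₀) a).subst v₀ a = Fm.equal a a := by
    rw [subst_equal, subst_eq_of_tCount_eq_zero ha]
    simp [Function.update_self]
  have step : Der (ReplMinus L)
      (Fm.equal a b ::ₘ Fm.equal a a ::ₘ Γ) Δ := by
    have := replMinusStep (s := a) (r := b) (v := v₀) (Q := Fm.equal (Term.var v₀) a)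
      (IsAtomic.equal _ _) ha hb (Γ := Γ) (Δ := Δ) ?_
    · rwa [e₂] at this
    · rwa [e₁, Multiset.cons_swap]
  exact refStep (Der.castL (Multiset.cons_swap _ _ _) step)


/-! ### Manufacturing lemmas -/

lemma MFGeq {Θ : Multiset (Fm L)} {C : Fm L} (h : Reach Θ C) :
    ∀ (_ : IsEqF C) (Ξ Δ₀ : Multiset (Fm L)), ∃ M', Θ + Ξ ≤ M' ∧
      (Der (ReplMinus L) (C ::ₘ M') Δ₀ → Der (ReplMinus L) (Θ + Ξ) Δ₀) := by
  induction h with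
  | @mem C hm _ =>
    intro he Ξ Δ₀
    obtain ⟨a, b, rfl⟩ := he
    obtain ⟨Θ₁, rfl⟩ := Multiset.exists_cons_of_mem hm
    refine ⟨Fm.equal a b ::ₘ Θ₁ + Ξ, le_refl _, fun d => ?_⟩
    rw [Multiset.cons_add] at d ⊢
    exact dupEq d
  | refl t =>
    intro _ Ξ Δ₀
    exact ⟨Θ + Ξ, le_refl _, fun d => refStep d⟩
  | @fwd s r v Q hQ hs hr h₁ h₂ ih₁ ih₂ =>
    intro he Ξ Δ₀
    obtain ⟨M₂, hM₂, T₂⟩ := ih₂ ⟨s, r, rfl⟩ Ξ Δ₀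
    have hΘM₂ : Θ ≤ M₂ := le_trans (Multiset.le_add_right _ _) hM₂
    obtain ⟨R₂, hR₂⟩ := Multiset.le_iff_exists_add.mp hΘM₂
    obtain ⟨M₁, hM₁, T₁⟩ := ih₁ (isEqF_subst hQ he) (Fm.equal s r ::ₘ R₂) Δ₀
    have hTX : Θ + (Fm.equal s r ::ₘ R₂) = Fm.equal s r ::ₘ M₂ := by
      rw [Multiset.add_cons, ← hR₂]
    refine ⟨M₁, ?_, fun d => ?_⟩
    · calc Θ + Ξ ≤ M₂ := hM₂
        _ ≤ Fm.equal s r ::ₘ M₂ := Multiset.le_cons_self _ _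
        _ = Θ + (Fm.equal s r ::ₘ R₂) := hTX.symm
        _ ≤ M₁ := hM₁
    · have hsr : Fm.equal s r ∈ M₁ :=
        Multiset.mem_of_le hM₁ (by rw [hTX]; exact Multiset.mem_cons_self _ _)
      obtain ⟨M₁', rfl⟩ := Multiset.exists_cons_of_mem hsr
      have step := replMinusStep hQ hs hr (Γ := M₁') (Δ := Δ₀)
        (Der.castL (Multiset.cons_swap _ _ _) d)
      exact T₂ (hTX ▸ T₁ (Der.castL (Multiset.cons_swap _ _ _) step))
  | @bwd s r v Q hQ hs hr h₁ h₂ ih₁ ih₂ =>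
    intro he Ξ Δ₀
    obtain ⟨M₂, hM₂, T₂⟩ := ih₂ ⟨s, r, rfl⟩ Ξ Δ₀
    have hΘM₂ : Θ ≤ M₂ := le_trans (Multiset.le_add_right _ _) hM₂
    obtain ⟨R₂, hR₂⟩ := Multiset.le_iff_exists_add.mp hΘM₂
    obtain ⟨M₁, hM₁, T₁⟩ := ih₁ (isEqF_subst hQ he)
      (Fm.equal r s ::ₘ Fm.equal s r ::ₘ R₂) Δ₀
    have hTX : Θ + (Fm.equal r s ::ₘ Fm.equal s r ::ₘ R₂) =
        Fm.equal r s ::ₘ Fm.equal s r ::ₘ M₂ := by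
      rw [Multiset.add_cons, Multiset.add_cons, ← hR₂]
    refine ⟨M₁, ?_, fun d => ?_⟩
    · calc Θ + Ξ ≤ M₂ := hM₂
        _ ≤ Fm.equal s r ::ₘ M₂ := Multiset.le_cons_self _ _
        _ ≤ Fm.equal r s ::ₘ Fm.equal s r ::ₘ M₂ := Multiset.le_cons_self _ _
        _ = _ := hTX.symm
        _ ≤ M₁ := hM₁
    · have hrs : Fm.equal r s ∈ M₁ :=
        Multiset.mem_of_le hM₁ (by rw [hTX]; exact Multiset.mem_cons_self _ _)
      obtain ⟨M₁', rfl⟩ := Multiset.exists_cons_of_mem hrs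
      have step := replMinusStep (s := r) (r := s) hQ hr hs (Γ := M₁') (Δ := Δ₀)
        (Der.castL (Multiset.cons_swap _ _ _) d)
      have d₁ : Der (ReplMinus L) (Fm.equal r s ::ₘ Fm.equal s r ::ₘ M₂) Δ₀ :=
        hTX ▸ T₁ (Der.castL (Multiset.cons_swap _ _ _) step)
      exact T₂ (symEq d₁)

lemma MFGany {Θ : Multiset (Fm L)} {C : Fm L} (h : Reach Θ C) :
    ∀ (Ξ Δ₀ : Multiset (Fm L)), ∃ M', Ξ ≤ M' ∧
      (Der (ReplMinus L) (C ::ₘ M') Δ₀ → Der (ReplMinus L) (Θ + Ξ) Δ₀) := by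
  induction h with
  | @mem C hm _ =>
    intro Ξ Δ₀
    obtain ⟨Θ₁, rfl⟩ := Multiset.exists_cons_of_mem hm
    exact ⟨Θ₁ + Ξ, Multiset.le_add_left _ _,
      fun d => Der.castL (Multiset.cons_add _ _ _).symm d⟩
  | refl t =>
    intro Ξ Δ₀
    exact ⟨Θ + Ξ, Multiset.le_add_left _ _, fun d => refStep d⟩
  | @fwd s r v Q hQ hs hr h₁ h₂ ih₁ ih₂ =>
    intro Ξ Δ₀
    obtain ⟨M₂, hM₂, T₂⟩ := MFGeq h₂ ⟨s, r, rfl⟩ Ξ Δ₀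
    have hΘM₂ : Θ ≤ M₂ := le_trans (Multiset.le_add_right _ _) hM₂
    obtain ⟨R₂, hR₂⟩ := Multiset.le_iff_exists_add.mp hΘM₂
    obtain ⟨M₁, hM₁, T₁⟩ := ih₁ (Fm.equal s r ::ₘ R₂) Δ₀
    have hTX : Θ + (Fm.equal s r ::ₘ R₂) = Fm.equal s r ::ₘ M₂ := by
      rw [Multiset.add_cons, ← hR₂]
    refine ⟨M₁, ?_, fun d => ?_⟩
    · have hΞR : Ξ ≤ R₂ := by
        rw [hR₂] at hM₂; exact (add_le_add_iff_left Θ).mp hM₂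
      calc Ξ ≤ R₂ := hΞR
        _ ≤ Fm.equal s r ::ₘ R₂ := Multiset.le_cons_self _ _
        _ ≤ M₁ := hM₁
    · have hsr : Fm.equal s r ∈ M₁ :=
        Multiset.mem_of_le hM₁ (Multiset.mem_cons_self _ _)
      obtain ⟨M₁', rfl⟩ := Multiset.exists_cons_of_mem hsr
      have step := replMinusStep hQ hs hr (Γ := M₁') (Δ := Δ₀)
        (Der.castL (Multiset.cons_swap _ _ _) d)
      exact T₂ (hTX ▸ T₁ (Der.castL (Multiset.cons_swap _ _ _) step))
  | @bwd s r v Q hQ hs hr h₁ h₂ ih₁ ih₂ =>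
    intro Ξ Δ₀
    obtain ⟨M₂, hM₂, T₂⟩ := MFGeq h₂ ⟨s, r, rfl⟩ Ξ Δ₀
    have hΘM₂ : Θ ≤ M₂ := le_trans (Multiset.le_add_right _ _) hM₂
    obtain ⟨R₂, hR₂⟩ := Multiset.le_iff_exists_add.mp hΘM₂
    obtain ⟨M₁, hM₁, T₁⟩ := ih₁ (Fm.equal r s ::ₘ Fm.equal s r ::ₘ R₂) Δ₀
    have hTX : Θ + (Fm.equal r s ::ₘ Fm.equal s r ::ₘ R₂) =
        Fm.equal r s ::ₘ Fm.equal s r ::ₘ M₂ := by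
      rw [Multiset.add_cons, Multiset.add_cons, ← hR₂]
    refine ⟨M₁, ?_, fun d => ?_⟩
    · have hΞR : Ξ ≤ R₂ := by
        rw [hR₂] at hM₂; exact (add_le_add_iff_left Θ).mp hM₂
      calc Ξ ≤ R₂ := hΞR
        _ ≤ Fm.equal s r ::ₘ R₂ := Multiset.le_cons_self _ _
        _ ≤ Fm.equal r s ::ₘ Fm.equal s r ::ₘ R₂ := Multiset.le_cons_self _ _
        _ ≤ M₁ := hM₁
    · have hrs : Fm.equal r s ∈ M₁ :=
        Multiset.mem_of_le hM₁ (Multiset.mem_cons_self _ _)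
      obtain ⟨M₁', rfl⟩ := Multiset.exists_cons_of_mem hrs
      have step := replMinusStep (s := r) (r := s) hQ hr hs (Γ := M₁') (Δ := Δ₀)
        (Der.castL (Multiset.cons_swap _ _ _) d)
      have d₁ : Der (ReplMinus L) (Fm.equal r s ::ₘ Fm.equal s r ::ₘ M₂) Δ₀ :=
        hTX ▸ T₁ (Der.castL (Multiset.cons_swap _ _ _) step)
      exact T₂ (symEq d₁)

/-- the key right-hand lemma: a reachable atom is derivable on the right. -/
lemma reach_right {Θ : Multiset (Fm L)} {P : Fm L} (h : Reach Θ P)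
    (Δ' : Multiset (Fm L)) : Der (ReplMinus L) Θ (P ::ₘ Δ') := by
  obtain ⟨M', _, T⟩ := MFGany h 0 (P ::ₘ Δ')
  have := T ⟨0, DerC.ax h.atomic⟩
  rwa [add_zero] at this


/-! ### From G3c^= to G3c^=⁻ -/

lemma hΦ_transfer {Θ Θ' Φ : Multiset (Fm L)}
    (hsub : ∀ D : Fm L, D.IsAtomic → D ∈ Θ → D ∈ Θ')
    (hΦ : ∀ C ∈ Φ, Fm.IsAtomic C ∧ Reach Θ C) :
    ∀ C ∈ Φ, Fm.IsAtomic C ∧ Reach Θ' C :=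
  fun C hC => ⟨(hΦ C hC).1, Reach.mono hsub (hΦ C hC).2⟩

lemma split_principal {X : Fm L} (hX : ¬ X.IsAtomic) {Γ Θ Φ : Multiset (Fm L)}
    (hΨ : X ::ₘ Γ = Θ + Φ) (hΦ : ∀ C ∈ Φ, Fm.IsAtomic C ∧ Reach Θ C) :
    ∃ Θ₁, Θ = X ::ₘ Θ₁ ∧ Γ = Θ₁ + Φ := by
  have hXm : X ∈ Θ + Φ := hΨ ▸ Multiset.mem_cons_self X Γ
  rcases Multiset.mem_add.mp hXm with h | h
  · exact split_cons hΨ h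
  · exact absurd (hΦ X h).1 hX

lemma toMinus {n : ℕ} {Ψ Δ : Multiset (Fm L)} (D : DerC (ReplFull L) n Ψ Δ) :
    ∀ {Θ Φ : Multiset (Fm L)}, Ψ = Θ + Φ →
      (∀ C ∈ Φ, Fm.IsAtomic C ∧ Reach Θ C) → Der (ReplMinus L) Θ Δ := by
  induction D with
  | @ax n Γ Δ P hP =>
    intro Θ Φ hΨ hΦ
    have hPm : P ∈ Θ + Φ := hΨ ▸ Multiset.mem_cons_self P Γ
    rcases Multiset.mem_add.mp hPm with h | h
    · obtain ⟨Θ₁, rfl⟩ := Multiset.exists_cons_of_mem h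
      exact ⟨0, DerC.ax hP⟩
    · exact reach_right (hΦ P h).2 Δ
  | @botL n Γ Δ =>
    intro Θ Φ hΨ hΦ
    have hm : Fm.falsum ∈ Θ + Φ := hΨ ▸ Multiset.mem_cons_self _ Γ
    rcases Multiset.mem_add.mp hm with h | h
    · obtain ⟨Θ₁, rfl⟩ := Multiset.exists_cons_of_mem h
      exact ⟨0, DerC.botL⟩
    · exact absurd (hΦ _ h).1 (by intro hh; cases hh)
  | @andL n Γ Δ A B d ih =>
    intro Θ Φ hΨ hΦ
    obtain ⟨Θ₁, rfl, hΓ₁⟩ := split_principal (by intro hh; cases hh) hΨ hΦ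
    have hsub : ∀ D : Fm L, D.IsAtomic → D ∈ Fm.and A B ::ₘ Θ₁ → D ∈ A ::ₘ B ::ₘ Θ₁ := by
      intro D hD hDm
      rcases Multiset.mem_cons.mp hDm with h | h
      · exact absurd (h ▸ hD) (by intro hh; cases hh)
      · exact Multiset.mem_cons_of_mem (Multiset.mem_cons_of_mem h)
    obtain ⟨m, dm⟩ := ih (by rw [hΓ₁, Multiset.cons_add, Multiset.cons_add])
      (hΦ_transfer hsub hΦ)
    exact ⟨m + 1, DerC.andL dm⟩
  | @andR n Γ Δ A B d₁ d₂ ih₁ ih₂ =>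
    intro Θ Φ hΨ hΦ
    obtain ⟨m₁, dm₁⟩ := ih₁ hΨ hΦ
    obtain ⟨m₂, dm₂⟩ := ih₂ hΨ hΦ
    exact ⟨max m₁ m₂ + 1, DerC.andR (mono dm₁ (le_max_left _ _)) (mono dm₂ (le_max_right _ _))⟩
  | @orL n Γ Δ A B d₁ d₂ ih₁ ih₂ =>
    intro Θ Φ hΨ hΦ
    obtain ⟨Θ₁, rfl, hΓ₁⟩ := split_principal (by intro hh; cases hh) hΨ hΦ
    have hsub : ∀ (X : Fm L), ∀ D : Fm L, D.IsAtomic → D ∈ Fm.or A B ::ₘ Θ₁ → D ∈ X ::ₘ Θ₁ := by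
      intro X D hD hDm
      rcases Multiset.mem_cons.mp hDm with h | h
      · exact absurd (h ▸ hD) (by intro hh; cases hh)
      · exact Multiset.mem_cons_of_mem h
    obtain ⟨m₁, dm₁⟩ := ih₁ (by rw [hΓ₁, Multiset.cons_add]) (hΦ_transfer (hsub A) hΦ)
    obtain ⟨m₂, dm₂⟩ := ih₂ (by rw [hΓ₁, Multiset.cons_add]) (hΦ_transfer (hsub B) hΦ)
    exact ⟨max m₁ m₂ + 1, DerC.orL (mono dm₁ (le_max_left _ _)) (mono dm₂ (le_max_right _ _))⟩
  | @orR n Γ Δ A B d ih =>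
    intro Θ Φ hΨ hΦ
    obtain ⟨m, dm⟩ := ih hΨ hΦ
    exact ⟨m + 1, DerC.orR dm⟩
  | @impL n Γ Δ A B d₁ d₂ ih₁ ih₂ =>
    intro Θ Φ hΨ hΦ
    obtain ⟨Θ₁, rfl, hΓ₁⟩ := split_principal (by intro hh; cases hh) hΨ hΦ
    have hsub1 : ∀ D : Fm L, D.IsAtomic → D ∈ Fm.imp A B ::ₘ Θ₁ → D ∈ Θ₁ := by
      intro D hD hDm
      rcases Multiset.mem_cons.mp hDm with h | h
      · exact absurd (h ▸ hD) (by intro hh; cases hh)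
      · exact h
    have hsub2 : ∀ D : Fm L, D.IsAtomic → D ∈ Fm.imp A B ::ₘ Θ₁ → D ∈ B ::ₘ Θ₁ :=
      fun D hD hDm => Multiset.mem_cons_of_mem (hsub1 D hD hDm)
    obtain ⟨m₁, dm₁⟩ := ih₁ hΓ₁ (hΦ_transfer hsub1 hΦ)
    obtain ⟨m₂, dm₂⟩ := ih₂ (by rw [hΓ₁, Multiset.cons_add]) (hΦ_transfer hsub2 hΦ)
    exact ⟨max m₁ m₂ + 1, DerC.impL (mono dm₁ (le_max_left _ _)) (mono dm₂ (le_max_right _ _))⟩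
  | @impR n Γ Δ A B d ih =>
    intro Θ Φ hΨ hΦ
    have hsub : ∀ D : Fm L, D.IsAtomic → D ∈ Θ → D ∈ A ::ₘ Θ :=
      fun D _ h => Multiset.mem_cons_of_mem h
    obtain ⟨m, dm⟩ := ih (by rw [hΨ, Multiset.cons_add]) (hΦ_transfer hsub hΦ)
    exact ⟨m + 1, DerC.impR dm⟩
  | @allL n Γ Δ x t A hf d ih =>
    intro Θ Φ hΨ hΦ
    obtain ⟨Θ₁, rfl, hΓ₁⟩ := split_principal (by intro hh; cases hh) hΨ hΦ
    have hsub : ∀ D : Fm L, D.IsAtomic → D ∈ Fm.all x A ::ₘ Θ₁ →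
        D ∈ A.subst x t ::ₘ Fm.all x A ::ₘ Θ₁ :=
      fun D _ h => Multiset.mem_cons_of_mem h
    obtain ⟨m, dm⟩ := ih (by rw [hΓ₁, Multiset.cons_add, Multiset.cons_add])
      (hΦ_transfer hsub hΦ)
    exact ⟨m + 1, DerC.allL hf dm⟩
  | @allR n Γ Δ x y A hf hy hΓ hΔ d ih =>
    intro Θ Φ hΨ hΦ
    obtain ⟨m, dm⟩ := ih hΨ hΦ
    refine ⟨m + 1, DerC.allR hf hy (fun C hC => hΓ C ?_) hΔ dm⟩
    rw [hΨ]; exact Multiset.mem_add.mpr (Or.inl hC)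
  | @exL n Γ Δ x y A hf hy hΓ hΔ d ih =>
    intro Θ Φ hΨ hΦ
    obtain ⟨Θ₁, rfl, hΓ₁⟩ := split_principal (by intro hh; cases hh) hΨ hΦ
    have hsub : ∀ D : Fm L, D.IsAtomic → D ∈ Fm.ex x A ::ₘ Θ₁ →
        D ∈ A.subst x (Term.var y) ::ₘ Θ₁ := by
      intro D hD hDm
      rcases Multiset.mem_cons.mp hDm with h | h
      · exact absurd (h ▸ hD) (by intro hh; cases hh)
      · exact Multiset.mem_cons_of_mem h
    obtain ⟨m, dm⟩ := ih (by rw [hΓ₁, Multiset.cons_add]) (hΦ_transfer hsub hΦ)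
    refine ⟨m + 1, DerC.exL hf hy (fun C hC => hΓ C ?_) hΔ dm⟩
    rw [hΓ₁]; exact Multiset.mem_add.mpr (Or.inl hC)
  | @exR n Γ Δ x t A hf d ih =>
    intro Θ Φ hΨ hΦ
    obtain ⟨m, dm⟩ := ih hΨ hΦ
    exact ⟨m + 1, DerC.exR hf dm⟩
  | @ref n Γ Δ t d ih =>
    intro Θ Φ hΨ hΦ
    have hsub : ∀ D : Fm L, D.IsAtomic → D ∈ Θ → D ∈ Fm.equal t t ::ₘ Θ :=
      fun D _ h => Multiset.mem_cons_of_mem h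
    exact refStep (ih (by rw [hΨ, Multiset.cons_add]) (hΦ_transfer hsub hΦ))
  | @repl n Γp Γc Δ h d ih =>
    intro Θ Φ hΨ hΦ
    obtain ⟨s, r, v, Q, Γ₁, hQ, hs, hr, hp, hc⟩ := h
    have hE : Fm.equal s r ∈ Θ + Φ := by
      rw [← hΨ, hc]; exact Multiset.mem_cons_self _ _
    have hA : Q.subst v s ∈ Θ + Φ := by
      rw [← hΨ, hc]; exact Multiset.mem_cons_of_mem (Multiset.mem_cons_self _ _)
    have reachE : Reach Θ (Fm.equal s r) := by
      rcases Multiset.mem_add.mp hE with h' | h'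
      · exact Reach.mem h' (IsAtomic.equal _ _)
      · exact (hΦ _ h').2
    have reachA : Reach Θ (Q.subst v s) := by
      rcases Multiset.mem_add.mp hA with h' | h'
      · exact Reach.mem h' (atomic_subst hQ _ _)
      · exact (hΦ _ h').2
    have reachB : Reach Θ (Q.subst v r) := Reach.fwd hQ hs hr reachA reachE
    refine ih (Θ := Θ) (Φ := Q.subst v r ::ₘ Φ) ?_ ?_
    · rw [hp, Multiset.add_cons, ← hΨ, hc, Multiset.cons_swap (Q.subst v s) (Q.subst v r),
        Multiset.cons_swap (Fm.equal s r) (Q.subst v r)]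
    · intro C hC
      rcases Multiset.mem_cons.mp hC with h' | h'
      · exact h' ▸ ⟨atomic_subst hQ _ _, reachB⟩
      · exact hΦ C h'


/-! ### Weakening in G3c^= -/

lemma castC {rp} {n : ℕ} {Γ Γ' Δ : Multiset (Fm L)} (h : Γ = Γ')
    (d : DerC rp n Γ Δ) : DerC rp n Γ' Δ := h ▸ d

def Anch (Γ : Multiset (Fm L)) (C : Fm L) : Prop :=
  ∀ w ∈ C.freeVars, ∃ D₀ : Fm L, D₀ ∈ Γ ∧ D₀.IsAtomic ∧ w ∈ D₀.freeVars

lemma anch_transfer {Γ Γ' : Multiset (Fm L)} {C : Fm L}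
    (hsub : ∀ D₀ : Fm L, D₀.IsAtomic → D₀ ∈ Γ → D₀ ∈ Γ')
    (h : Anch Γ C) : Anch Γ' C :=
  fun w hw => let ⟨D₀, h1, h2, h3⟩ := h w hw; ⟨D₀, hsub D₀ h2 h1, h2, h3⟩

lemma weakF {n : ℕ} {Γ Δ : Multiset (Fm L)} (D : DerC (ReplFull L) n Γ Δ) :
    ∀ {C : Fm L}, Anch Γ C → DerC (ReplFull L) n (C ::ₘ Γ) Δ := by
  induction D with
  | @ax n Γ Δ P hP =>
    intro C _
    exact castC (Multiset.cons_swap _ _ _) (DerC.ax hP)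
  | @botL n Γ Δ =>
    intro C _
    exact castC (Multiset.cons_swap _ _ _) DerC.botL
  | @andL n Γ Δ A B d ih =>
    intro C hC
    have hsub : ∀ D₀ : Fm L, D₀.IsAtomic → D₀ ∈ Fm.and A B ::ₘ Γ → D₀ ∈ A ::ₘ B ::ₘ Γ := by
      intro D₀ hD hDm
      rcases Multiset.mem_cons.mp hDm with h | h
      · exact absurd (h ▸ hD) (by intro hh; cases hh)
      · exact Multiset.mem_cons_of_mem (Multiset.mem_cons_of_mem h)
    have dm := ih (anch_transfer hsub hC)
    have e : C ::ₘ A ::ₘ B ::ₘ Γ = A ::ₘ B ::ₘ C ::ₘ Γ := by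
      rw [Multiset.cons_swap C A, Multiset.cons_swap C B]
    exact castC (Multiset.cons_swap _ _ _) (DerC.andL (castC e dm))
  | @andR n Γ Δ A B d₁ d₂ ih₁ ih₂ =>
    intro C hC
    exact DerC.andR (ih₁ hC) (ih₂ hC)
  | @orL n Γ Δ A B d₁ d₂ ih₁ ih₂ =>
    intro C hC
    have hsub : ∀ (X : Fm L), ∀ D₀ : Fm L, D₀.IsAtomic → D₀ ∈ Fm.or A B ::ₘ Γ → D₀ ∈ X ::ₘ Γ := by
      intro X D₀ hD hDm
      rcases Multiset.mem_cons.mp hDm with h | h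
      · exact absurd (h ▸ hD) (by intro hh; cases hh)
      · exact Multiset.mem_cons_of_mem h
    have dm₁ := ih₁ (anch_transfer (hsub A) hC)
    have dm₂ := ih₂ (anch_transfer (hsub B) hC)
    exact castC (Multiset.cons_swap _ _ _)
      (DerC.orL (castC (Multiset.cons_swap _ _ _) dm₁) (castC (Multiset.cons_swap _ _ _) dm₂))
  | @orR n Γ Δ A B d ih =>
    intro C hC
    exact DerC.orR (ih hC)
  | @impL n Γ Δ A B d₁ d₂ ih₁ ih₂ =>
    intro C hC
    have hsub1 : ∀ D₀ : Fm L, D₀.IsAtomic → D₀ ∈ Fm.imp A B ::ₘ Γ → D₀ ∈ Γ := by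
      intro D₀ hD hDm
      rcases Multiset.mem_cons.mp hDm with h | h
      · exact absurd (h ▸ hD) (by intro hh; cases hh)
      · exact h
    have hsub2 : ∀ D₀ : Fm L, D₀.IsAtomic → D₀ ∈ Fm.imp A B ::ₘ Γ → D₀ ∈ B ::ₘ Γ :=
      fun D₀ hD hDm => Multiset.mem_cons_of_mem (hsub1 D₀ hD hDm)
    have dm₁ := ih₁ (anch_transfer hsub1 hC)
    have dm₂ := ih₂ (anch_transfer hsub2 hC)
    exact castC (Multiset.cons_swap _ _ _)
      (DerC.impL dm₁ (castC (Multiset.cons_swap _ _ _) dm₂))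
  | @impR n Γ Δ A B d ih =>
    intro C hC
    have hsub : ∀ D₀ : Fm L, D₀.IsAtomic → D₀ ∈ Γ → D₀ ∈ A ::ₘ Γ :=
      fun D₀ _ h => Multiset.mem_cons_of_mem h
    exact DerC.impR (castC (Multiset.cons_swap _ _ _) (ih (anch_transfer hsub hC)))
  | @allL n Γ Δ x t A hf d ih =>
    intro C hC
    have hsub : ∀ D₀ : Fm L, D₀.IsAtomic → D₀ ∈ Fm.all x A ::ₘ Γ →
        D₀ ∈ A.subst x t ::ₘ Fm.all x A ::ₘ Γ :=
      fun D₀ _ h => Multiset.mem_cons_of_mem h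
    have dm := ih (anch_transfer hsub hC)
    have e : C ::ₘ A.subst x t ::ₘ Fm.all x A ::ₘ Γ =
        A.subst x t ::ₘ Fm.all x A ::ₘ C ::ₘ Γ := by
      rw [Multiset.cons_swap C (A.subst x t), Multiset.cons_swap C (Fm.all x A)]
    exact castC (Multiset.cons_swap _ _ _) (DerC.allL hf (castC e dm))
  | @allR n Γ Δ x y A hf hy hΓ hΔ d ih =>
    intro C hC
    refine DerC.allR hf hy (fun C₀ hC₀ => ?_) hΔ (ih hC)
    rcases Multiset.mem_cons.mp hC₀ with h | h
    · subst h
      intro hyC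
      obtain ⟨D₀, h1, _, h3⟩ := hC y hyC
      exact hΓ D₀ h1 h3
    · exact hΓ C₀ h
  | @exL n Γ Δ x y A hf hy hΓ hΔ d ih =>
    intro C hC
    have hsub : ∀ D₀ : Fm L, D₀.IsAtomic → D₀ ∈ Fm.ex x A ::ₘ Γ →
        D₀ ∈ A.subst x (Term.var y) ::ₘ Γ := by
      intro D₀ hD hDm
      rcases Multiset.mem_cons.mp hDm with h | h
      · exact absurd (h ▸ hD) (by intro hh; cases hh)
      · exact Multiset.mem_cons_of_mem h
    have dm := ih (anch_transfer hsub hC)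
    refine castC (Multiset.cons_swap _ _ _)
      (DerC.exL hf hy (fun C₀ hC₀ => ?_) hΔ (castC (Multiset.cons_swap _ _ _) dm))
    rcases Multiset.mem_cons.mp hC₀ with h | h
    · subst h
      intro hyC
      obtain ⟨D₀, h1, h2, h3⟩ := hC y hyC
      have : D₀ ∈ Γ := by
        rcases Multiset.mem_cons.mp h1 with h' | h'
        · exact absurd (h' ▸ h2) (by intro hh; cases hh)
        · exact h'
      exact hΓ D₀ this h3
    · exact hΓ C₀ h
  | @exR n Γ Δ x t A hf d ih =>
    intro C hC
    exact DerC.exR hf (ih hC)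
  | @ref n Γ Δ t d ih =>
    intro C hC
    have hsub : ∀ D₀ : Fm L, D₀.IsAtomic → D₀ ∈ Γ → D₀ ∈ Fm.equal t t ::ₘ Γ :=
      fun D₀ _ h => Multiset.mem_cons_of_mem h
    have dm := ih (anch_transfer hsub hC)
    exact DerC.ref t (castC (Multiset.cons_swap _ _ _) dm)
  | @repl n Γp Γc Δ h d ih =>
    intro C hC
    obtain ⟨s, r, v, Q, Γ₁, hQ, hs, hr, hp, hc⟩ := h
    subst hp; subst hc
    have hsub : ∀ D₀ : Fm L, D₀.IsAtomic →
        D₀ ∈ Fm.equal s r ::ₘ Q.subst v s ::ₘ Γ₁ →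
        D₀ ∈ Fm.equal s r ::ₘ Q.subst v s ::ₘ Q.subst v r ::ₘ Γ₁ := by
      intro D₀ _ hDm
      rcases Multiset.mem_cons.mp hDm with h' | h'
      · exact h' ▸ Multiset.mem_cons_self _ _
      · rcases Multiset.mem_cons.mp h' with h'' | h''
        · exact Multiset.mem_cons_of_mem (h'' ▸ Multiset.mem_cons_self _ _)
        · exact Multiset.mem_cons_of_mem (Multiset.mem_cons_of_mem
            (Multiset.mem_cons_of_mem h''))
    have dm := ih (anch_transfer hsub hC)
    have e : C ::ₘ Fm.equal s r ::ₘ Q.subst v s ::ₘ Q.subst v r ::ₘ Γ₁ =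
        Fm.equal s r ::ₘ Q.subst v s ::ₘ Q.subst v r ::ₘ C ::ₘ Γ₁ := by
      rw [Multiset.cons_swap C (Fm.equal s r), Multiset.cons_swap C (Q.subst v s),
        Multiset.cons_swap C (Q.subst v r)]
    have step := DerC.repl (rp := ReplFull L)
      ⟨s, r, v, Q, C ::ₘ Γ₁, hQ, hs, hr, rfl, rfl⟩ (castC e dm)
    have e2 : Fm.equal s r ::ₘ Q.subst v s ::ₘ C ::ₘ Γ₁ =
        C ::ₘ Fm.equal s r ::ₘ Q.subst v s ::ₘ Γ₁ := by
      rw [Multiset.cons_swap (Q.subst v s) C, Multiset.cons_swap (Fm.equal s r) C]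
    exact castC e2 step

/-! ### From G3c^=⁻ to G3c^= -/

lemma freeVars_subst_sub {Q : Fm L} (hQ : Q.IsAtomic) {s r : L.Term ℕ} {v : ℕ}
    (hs : tCount v s = 0) {w : ℕ} (hw : w ∈ (Q.subst v s).freeVars) :
    w ∈ (Fm.equal s r).freeVars ∨ w ∈ (Q.subst v r).freeVars := by
  by_cases hwv : w = v
  · subst hwv
    exfalso
    cases hQ with
    | equal a b =>
      rw [subst_equal] at hw
      simp only [Fm.freeVars, Set.mem_setOf_eq] at hw
      rcases hw with h | h
      · exact h (tCount_subst_self hs a)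
      · exact h (tCount_subst_self hs b)
    | rel R ts =>
      rw [subst_rel] at hw
      simp only [Fm.freeVars, Set.mem_setOf_eq] at hw
      obtain ⟨i, h⟩ := hw
      exact h (tCount_subst_self hs (ts i))
  · have key : ∀ t : L.Term ℕ, tCount w (t.subst (Function.update Term.var v s)) ≠ 0 →
        tCount w s ≠ 0 ∨ tCount w (t.subst (Function.update Term.var v r)) ≠ 0 := by
      intro t ht
      rw [tCount_subst_ne hwv] at ht
      rw [tCount_subst_ne hwv]
      rcases Nat.eq_zero_or_pos (tCount w t) with h0 | h0
      · left
        intro hws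
        exact ht (by rw [h0, hws, Nat.mul_zero])
      · right; omega
    cases hQ with
    | equal a b =>
      rw [subst_equal] at hw
      rw [subst_equal]
      simp only [Fm.freeVars, Set.mem_setOf_eq] at hw ⊢
      rcases hw with h | h
      · rcases key a h with h' | h'
        · exact Or.inl (Or.inl h')
        · exact Or.inr (Or.inl h')
      · rcases key b h with h' | h'
        · exact Or.inl (Or.inl h')
        · exact Or.inr (Or.inr h')
    | rel R ts =>
      rw [subst_rel] at hw
      rw [subst_rel]
      simp only [Fm.freeVars, Set.mem_setOf_eq] at hw ⊢
      obtain ⟨i, h⟩ := hw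
      rcases key (ts i) h with h' | h'
      · exact Or.inl (Or.inl h')
      · exact Or.inr ⟨i, h'⟩

lemma toFull {n : ℕ} {Γ Δ : Multiset (Fm L)} (D : DerC (ReplMinus L) n Γ Δ) :
    Der (ReplFull L) Γ Δ := by
  induction D with
  | ax hP => exact ⟨0, DerC.ax hP⟩
  | botL => exact ⟨0, DerC.botL⟩
  | andL _ ih => obtain ⟨m, dm⟩ := ih; exact ⟨m + 1, DerC.andL dm⟩
  | andR _ _ ih₁ ih₂ =>
    obtain ⟨m₁, d₁⟩ := ih₁; obtain ⟨m₂, d₂⟩ := ih₂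
    exact ⟨max m₁ m₂ + 1, DerC.andR (mono d₁ (le_max_left _ _)) (mono d₂ (le_max_right _ _))⟩
  | orL _ _ ih₁ ih₂ =>
    obtain ⟨m₁, d₁⟩ := ih₁; obtain ⟨m₂, d₂⟩ := ih₂
    exact ⟨max m₁ m₂ + 1, DerC.orL (mono d₁ (le_max_left _ _)) (mono d₂ (le_max_right _ _))⟩
  | orR _ ih => obtain ⟨m, dm⟩ := ih; exact ⟨m + 1, DerC.orR dm⟩
  | impL _ _ ih₁ ih₂ =>
    obtain ⟨m₁, d₁⟩ := ih₁; obtain ⟨m₂, d₂⟩ := ih₂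
    exact ⟨max m₁ m₂ + 1, DerC.impL (mono d₁ (le_max_left _ _)) (mono d₂ (le_max_right _ _))⟩
  | impR _ ih => obtain ⟨m, dm⟩ := ih; exact ⟨m + 1, DerC.impR dm⟩
  | allL hf _ ih => obtain ⟨m, dm⟩ := ih; exact ⟨m + 1, DerC.allL hf dm⟩
  | allR hf hy hΓ hΔ _ ih => obtain ⟨m, dm⟩ := ih; exact ⟨m + 1, DerC.allR hf hy hΓ hΔ dm⟩
  | exL hf hy hΓ hΔ _ ih => obtain ⟨m, dm⟩ := ih; exact ⟨m + 1, DerC.exL hf hy hΓ hΔ dm⟩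
  | exR hf _ ih => obtain ⟨m, dm⟩ := ih; exact ⟨m + 1, DerC.exR hf dm⟩
  | ref t _ ih => obtain ⟨m, dm⟩ := ih; exact ⟨m + 1, DerC.ref t dm⟩
  | @repl n Γp Γc Δ h d ih =>
    obtain ⟨s, r, v, Q, Γ₁, hQ, hs, hr, hp, hc⟩ := h
    subst hp; subst hc
    obtain ⟨m, dm⟩ := ih
    have hanch : Anch (Fm.equal s r ::ₘ Q.subst v r ::ₘ Γ₁) (Q.subst v s) := by
      intro w hw
      rcases freeVars_subst_sub hQ hs (r := r) hw with h' | h'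
      · exact ⟨Fm.equal s r, Multiset.mem_cons_self _ _, IsAtomic.equal _ _, h'⟩
      · exact ⟨Q.subst v r, Multiset.mem_cons_of_mem (Multiset.mem_cons_self _ _),
          atomic_subst hQ _ _, h'⟩
    have dm' := weakF dm hanch
    have e : Q.subst v s ::ₘ Fm.equal s r ::ₘ Q.subst v r ::ₘ Γ₁ =
        Fm.equal s r ::ₘ Q.subst v s ::ₘ Q.subst v r ::ₘ Γ₁ := by
      rw [Multiset.cons_swap (Q.subst v s) (Fm.equal s r)]
    exact ⟨m + 1, DerC.repl (rp := ReplFull L)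
      ⟨s, r, v, Q, Γ₁, hQ, hs, hr, rfl, rfl⟩ (castC e dm')⟩

end G3Equiv

/-- Equivalence of `G3c^=` and `G3c^=⁻`: a sequent `Γ ⇒ Δ` is derivable in `G3c^=`
if and only if it is derivable in `G3c^=⁻`. -/
theorem G3cEq_equiv_G3cEqMinus (L : FirstOrder.Language.{u, v})
    (Γ Δ : Multiset (Fm L)) :
    (∃ n, DerC (ReplFull L) n Γ Δ) ↔ (∃ n, DerC (ReplMinus L) n Γ Δ) := by
  constructor
  · rintro ⟨n, D⟩
    exact G3Equiv.toMinus D (add_zero Γ).symm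
      (fun C hC => absurd hC (Multiset.notMem_zero C))
  · rintro ⟨n, D⟩
    exact G3Equiv.toFull D
end

section
/- The rule Repl is admissible in G3i^=⁻: for every atomic formula P, terms s and r, variable v not occurring in s or r, and finite multisets Γ, Δ of formulas, if the sequent s = r, P[v/s], P[v/r], Γ ⇒ Δ is derivable in G3i^=⁻, then the sequent s = r, P[v/s], Γ ⇒ Δ is derivable in G3i^=⁻. -/
open FirstOrder Language Multiset

universe u v

variable {L : FirstOrder.Language.{u, v}}

section Admissibility

attribute [local instance] Classical.propDecidable

/-! ### Atomicity facts -/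

lemma not_atomic_falsum : ¬ (Fm.falsum : Fm L).IsAtomic := fun h => nomatch h
lemma not_atomic_and {A B : Fm L} : ¬ (Fm.and A B).IsAtomic := fun h => nomatch h
lemma not_atomic_or {A B : Fm L} : ¬ (Fm.or A B).IsAtomic := fun h => nomatch h
lemma not_atomic_imp {A B : Fm L} : ¬ (Fm.imp A B).IsAtomic := fun h => nomatch h
lemma not_atomic_all {x : ℕ} {A : Fm L} : ¬ (Fm.all x A).IsAtomic := fun h => nomatch h
lemma not_atomic_ex {x : ℕ} {A : Fm L} : ¬ (Fm.ex x A).IsAtomic := fun h => nomatch h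

lemma subst_equal (a b : L.Term ℕ) (v : ℕ) (t : L.Term ℕ) :
    (Fm.equal a b).subst v t =
      Fm.equal (a.subst (Function.update Term.var v t)) (b.subst (Function.update Term.var v t)) := rfl

lemma subst_rel {l : ℕ} (R : L.Relations l) (ts : Fin l → L.Term ℕ) (v : ℕ) (t : L.Term ℕ) :
    (Fm.rel R ts).subst v t = Fm.rel R (fun i => (ts i).subst (Function.update Term.var v t)) := rfl

lemma atomic_subst {P : Fm L} (hP : P.IsAtomic) (v : ℕ) (t : L.Term ℕ) :
    (P.subst v t).IsAtomic := by
  cases hP with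
  | equal a b => rw [subst_equal]; exact .equal _ _
  | rel R ts => rw [subst_rel]; exact .rel _ _

/-! ### Term lemmas -/

lemma tCount_subst_ne_s12 {w v : ℕ} {s r : L.Term ℕ} :
    ∀ {t : L.Term ℕ}, tCount w (t.subst (Function.update Term.var v s)) ≠ 0 →
      tCount w (t.subst (Function.update Term.var v r)) ≠ 0 ∨ tCount w s ≠ 0 := by
  intro t
  induction t with
  | var u =>
    intro h
    by_cases hu : u = v
    · subst hu; right; simpa [Term.subst, Function.update_self] using h
    · left; simpa [Term.subst, Function.update_of_ne hu] using h
  | func f ts ih =>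
    intro h
    have h' : ∃ i, tCount w ((ts i).subst (Function.update Term.var v s)) ≠ 0 := by
      by_contra hc
      push_neg at hc
      apply h
      show (Finset.univ.sum fun i => tCount w ((ts i).subst (Function.update Term.var v s))) = 0
      exact Finset.sum_eq_zero fun i _ => hc i
    obtain ⟨i, hi⟩ := h'
    rcases ih i hi with h1 | h2
    · left
      show (Finset.univ.sum fun i => tCount w ((ts i).subst (Function.update Term.var v r))) ≠ 0
      intro h0
      rw [Finset.sum_eq_zero_iff] at h0
      exact h1 (h0 i (Finset.mem_univ i))
    · right; exact h2

lemma subst_id_of_tCount {v : ℕ} {u : L.Term ℕ} :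
    ∀ {t : L.Term ℕ}, tCount v t = 0 → t.subst (Function.update Term.var v u) = t := by
  intro t
  induction t with
  | var w =>
    intro h
    have hw : w ≠ v := by
      intro hwv; subst hwv; simp [tCount] at h
    simp [Term.subst, Function.update_of_ne hw]
  | func f ts ih =>
    intro h
    have h' : ∀ i, tCount v (ts i) = 0 := by
      have h0 : (Finset.univ.sum fun i => tCount v (ts i)) = 0 := h
      rw [Finset.sum_eq_zero_iff] at h0
      exact fun i => h0 i (Finset.mem_univ i)
    show Term.func f (fun i => (ts i).subst (Function.update Term.var v u)) = Term.func f ts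
    congr 1
    funext i
    exact ih i (h' i)

def tvarsB : L.Term ℕ → Finset ℕ
  | .var w => {w}
  | .func _ ts => Finset.univ.biUnion fun i => tvarsB (ts i)

lemma tCount_eq_zero_of_not_mem {w : ℕ} :
    ∀ {t : L.Term ℕ}, w ∉ tvarsB t → tCount w t = 0 := by
  intro t
  induction t with
  | var u =>
    intro h
    simp [tvarsB] at h
    have : u ≠ w := fun hh => h hh.symm
    simp [tCount, this]
  | func f ts ih =>
    intro h
    simp [tvarsB] at h
    show (Finset.univ.sum fun i => tCount w (ts i)) = 0
    exact Finset.sum_eq_zero fun i _ => ih i (h i)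

lemma exists_fresh (a b : L.Term ℕ) : ∃ w, tCount w a = 0 ∧ tCount w b = 0 := by
  obtain ⟨w, hw⟩ := Infinite.exists_notMem_finset (tvarsB a ∪ tvarsB b)
  exact ⟨w, tCount_eq_zero_of_not_mem (fun h => hw (Finset.mem_union_left _ h)),
    tCount_eq_zero_of_not_mem (fun h => hw (Finset.mem_union_right _ h))⟩

/-! ### Free-variable lemmas -/

lemma mem_freeVars_equal {w : ℕ} {a b : L.Term ℕ} :
    w ∈ (Fm.equal a b).freeVars ↔ (tCount w a ≠ 0 ∨ tCount w b ≠ 0) := Iff.rfl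

lemma mem_freeVars_rel {w : ℕ} {l : ℕ} {R : L.Relations l} {ts : Fin l → L.Term ℕ} :
    w ∈ (Fm.rel R ts).freeVars ↔ ∃ i, tCount w (ts i) ≠ 0 := Iff.rfl

lemma freeVars_subst_sub {Q : Fm L} (hQ : Q.IsAtomic) {v : ℕ} {s r : L.Term ℕ} {w : ℕ}
    (h : w ∈ (Q.subst v s).freeVars) :
    w ∈ (Q.subst v r).freeVars ∨ w ∈ (Fm.equal s r).freeVars := by
  cases hQ with
  | equal a b =>
    rw [subst_equal] at h
    rw [subst_equal]
    rcases mem_freeVars_equal.mp h with h1 | h1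
    · rcases tCount_subst_ne_s12 h1 with h2 | h2
      · exact Or.inl (mem_freeVars_equal.mpr (Or.inl h2))
      · exact Or.inr (mem_freeVars_equal.mpr (Or.inl h2))
    · rcases tCount_subst_ne_s12 h1 with h2 | h2
      · exact Or.inl (mem_freeVars_equal.mpr (Or.inr h2))
      · exact Or.inr (mem_freeVars_equal.mpr (Or.inl h2))
  | rel R ts =>
    rw [subst_rel] at h
    rw [subst_rel]
    obtain ⟨i, hi⟩ := mem_freeVars_rel.mp h
    rcases tCount_subst_ne_s12 hi with h2 | h2
    · exact Or.inl (mem_freeVars_rel.mpr ⟨i, h2⟩)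
    · exact Or.inr (mem_freeVars_equal.mpr (Or.inl h2))

/-! ### Available atoms -/

inductive AvailF (E : Multiset (Fm L)) : Fm L → Prop where
  | refl (t : L.Term ℕ) : AvailF E (Fm.equal t t)
  | mem {B : Fm L} (h : B ∈ E) (hA : B.IsAtomic) : AvailF E B
  | step {s r : L.Term ℕ} {v : ℕ} {Q : Fm L} (hQ : Q.IsAtomic)
      (hs : tCount v s = 0) (hr : tCount v r = 0)
      (he : AvailF E (Fm.equal s r)) (hb : AvailF E (Q.subst v s)) :
      AvailF E (Q.subst v r)

lemma AvailF.mono {E E' : Multiset (Fm L)} (hE : ∀ B ∈ E, Fm.IsAtomic B → B ∈ E')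
    {X : Fm L} (h : AvailF E X) : AvailF E' X := by
  induction h with
  | refl t => exact .refl t
  | mem h hA => exact .mem (hE _ h hA) hA
  | step hQ hs hr _ _ ihe ihb => exact .step hQ hs hr ihe ihb

/-! ### Upward chains of Ref / Repl⁻ steps -/

inductive RStep : Multiset (Fm L) → Multiset (Fm L) → Prop where
  | ref (t : L.Term ℕ) (N : Multiset (Fm L)) : RStep N (Fm.equal t t ::ₘ N)
  | repl {s r : L.Term ℕ} {v : ℕ} {Q : Fm L} (N : Multiset (Fm L)) (hQ : Q.IsAtomic)
      (hs : tCount v s = 0) (hr : tCount v r = 0) :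
      RStep (Fm.equal s r ::ₘ Q.subst v s ::ₘ N) (Fm.equal s r ::ₘ Q.subst v r ::ₘ N)

def RChain : Multiset (Fm L) → Multiset (Fm L) → Prop := Relation.ReflTransGen RStep

def Der (Γ Δ : Multiset (Fm L)) : Prop := ∃ n, DerI (ReplMinus L) n Γ Δ

lemma RStep.sound {M M' Δ : Multiset (Fm L)} (h : RStep M M') (hD : Der M' Δ) : Der M Δ := by
  obtain ⟨n, hn⟩ := hD
  cases h with
  | ref t N => exact ⟨n + 1, .ref t hn⟩
  | @repl s r v Q N hQ hs hr => exact ⟨n + 1, .repl ⟨s, r, v, Q, N, hQ, hs, hr, rfl, rfl⟩ hn⟩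

lemma RChain.sound {M M' Δ : Multiset (Fm L)} (h : RChain M M') (hD : Der M' Δ) : Der M Δ := by
  induction h with
  | refl => exact hD
  | tail _ hbc ih => exact ih (hbc.sound hD)

lemma lemEq {E : Multiset (Fm L)} {e : Fm L} (h : AvailF E e) :
    ∀ q₁ q₂ : L.Term ℕ, e = Fm.equal q₁ q₂ →
    ∀ M, E ≤ M → ∃ M', RChain M (e ::ₘ M') ∧ M ≤ M' := by
  induction h with
  | refl t =>
    intro q₁ q₂ _ M _
    exact ⟨M, Relation.ReflTransGen.single (RStep.ref t M), le_rfl⟩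
  | @mem B hB hBa =>
    intro q₁ q₂ he M hM
    subst he
    obtain ⟨M₀, rfl⟩ := Multiset.exists_cons_of_mem (Multiset.mem_of_le hM hB)
    obtain ⟨w₀, hw₁, hw₂⟩ := exists_fresh q₁ q₂
    have h1 : (Fm.equal q₁ (Term.var w₀)).subst w₀ q₁ = Fm.equal q₁ q₁ := by
      rw [subst_equal, subst_id_of_tCount hw₁]
      congr 1
      exact Function.update_self _ _ _
    have h2 : (Fm.equal q₁ (Term.var w₀)).subst w₀ q₂ = Fm.equal q₁ q₂ := by
      rw [subst_equal, subst_id_of_tCount hw₁]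
      congr 1
      exact Function.update_self _ _ _
    refine ⟨Fm.equal q₁ q₂ ::ₘ M₀, ?_, le_rfl⟩
    have s1 : RStep (Fm.equal q₁ q₂ ::ₘ M₀) (Fm.equal q₁ q₁ ::ₘ Fm.equal q₁ q₂ ::ₘ M₀) :=
      RStep.ref q₁ _
    have s2 : RStep (Fm.equal q₁ q₂ ::ₘ Fm.equal q₁ q₁ ::ₘ M₀)
        (Fm.equal q₁ q₂ ::ₘ Fm.equal q₁ q₂ ::ₘ M₀) := by
      have := RStep.repl (s := q₁) (r := q₂) (v := w₀) (Q := Fm.equal q₁ (Term.var w₀)) M₀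
        (.equal _ _) hw₁ hw₂
      rwa [h1, h2] at this
    have s2' : RStep (Fm.equal q₁ q₁ ::ₘ Fm.equal q₁ q₂ ::ₘ M₀)
        (Fm.equal q₁ q₂ ::ₘ Fm.equal q₁ q₂ ::ₘ M₀) := by
      rw [Multiset.cons_swap]; exact s2
    exact Relation.ReflTransGen.tail (Relation.ReflTransGen.single s1) s2'
  | @step s r v Q hQ hs hr he hb ihe ihb =>
    intro q₁ q₂ heq M hM
    obtain ⟨a, b, rfl⟩ : ∃ a b, Q = Fm.equal a b := by
      cases hQ with
      | equal a b => exact ⟨a, b, rfl⟩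
      | rel R ts => rw [subst_rel] at heq; exact absurd heq (fun hh => nomatch hh)
    obtain ⟨M₁, hch₁, hM₁⟩ := ihe s r rfl M hM
    have hE₁ : E ≤ Fm.equal s r ::ₘ M₁ :=
      le_trans (le_trans hM hM₁) (Multiset.le_cons_self _ _)
    obtain ⟨M₂, hch₂, hM₂⟩ := ihb _ _ (subst_equal a b v s) (Fm.equal s r ::ₘ M₁) hE₁
    have hf2 : Fm.equal s r ∈ M₂ := Multiset.mem_of_le hM₂ (Multiset.mem_cons_self _ _)
    obtain ⟨M₃, rfl⟩ := Multiset.exists_cons_of_mem hf2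
    refine ⟨Fm.equal s r ::ₘ M₃, ?_,
      le_trans (le_trans hM₁ (Multiset.le_cons_self _ _)) hM₂⟩
    have hch₃ : RChain M ((Fm.equal a b).subst v s ::ₘ Fm.equal s r ::ₘ M₃) := hch₁.trans hch₂
    refine hch₃.tail ?_
    have s3 : RStep (Fm.equal s r ::ₘ (Fm.equal a b).subst v s ::ₘ M₃)
        (Fm.equal s r ::ₘ (Fm.equal a b).subst v r ::ₘ M₃) := RStep.repl M₃ hQ hs hr
    rw [Multiset.cons_swap] at s3
    rw [show ((Fm.equal a b).subst v r ::ₘ Fm.equal s r ::ₘ M₃ : Multiset (Fm L))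
        = Fm.equal s r ::ₘ (Fm.equal a b).subst v r ::ₘ M₃ from Multiset.cons_swap _ _ _]
    exact s3

lemma lemAtom {E : Multiset (Fm L)} {X : Fm L} (h : AvailF E X) :
    ∀ M, E ≤ M → ∃ M', RChain M (X ::ₘ M') ∧ M - E ≤ M' := by
  induction h with
  | refl t =>
    intro M _
    exact ⟨M, Relation.ReflTransGen.single (RStep.ref t M), tsub_le_self⟩
  | @mem B hB hBa =>
    intro M hM
    obtain ⟨M₀, hM₀⟩ := Multiset.exists_cons_of_mem (Multiset.mem_of_le hM hB)
    refine ⟨M₀, by rw [hM₀]; exact Relation.ReflTransGen.refl, ?_⟩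
    rw [hM₀]
    have h1 : (B ::ₘ M₀) - E ≤ (B ::ₘ M₀) - {B} :=
      tsub_le_tsub_left (Multiset.singleton_le.mpr hB) _
    rwa [Multiset.sub_singleton, Multiset.erase_cons_head] at h1
  | @step s r v Q hQ hs hr he hb _ ihb =>
    intro M hM
    obtain ⟨M₁, hch₁, hM₁⟩ := lemEq he s r rfl M hM
    have hE₁ : E ≤ Fm.equal s r ::ₘ M₁ :=
      le_trans (le_trans hM hM₁) (Multiset.le_cons_self _ _)
    obtain ⟨M₂, hch₂, hM₂⟩ := ihb (Fm.equal s r ::ₘ M₁) hE₁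
    have hf2 : Fm.equal s r ∈ M₂ := by
      have hmem : Fm.equal s r ∈ (Fm.equal s r ::ₘ M₁) - E := by
        rw [Multiset.cons_sub_of_le _ (le_trans hM hM₁)]
        exact Multiset.mem_cons_self _ _
      exact Multiset.mem_of_le hM₂ hmem
    obtain ⟨M₃, rfl⟩ := Multiset.exists_cons_of_mem hf2
    refine ⟨Fm.equal s r ::ₘ M₃, ?_, ?_⟩
    · have hch₃ : RChain M (Q.subst v s ::ₘ Fm.equal s r ::ₘ M₃) := hch₁.trans hch₂
      refine hch₃.tail ?_
      have s3 : RStep (Fm.equal s r ::ₘ Q.subst v s ::ₘ M₃)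
          (Fm.equal s r ::ₘ Q.subst v r ::ₘ M₃) := RStep.repl M₃ hQ hs hr
      rw [Multiset.cons_swap] at s3
      rw [show (Q.subst v r ::ₘ Fm.equal s r ::ₘ M₃ : Multiset (Fm L))
          = Fm.equal s r ::ₘ Q.subst v r ::ₘ M₃ from Multiset.cons_swap _ _ _]
      exact s3
    · calc M - E ≤ M₁ - E := tsub_le_tsub_right hM₁ E
        _ ≤ (Fm.equal s r ::ₘ M₁) - E := tsub_le_tsub_right (Multiset.le_cons_self _ _) E
        _ ≤ Fm.equal s r ::ₘ M₃ := hM₂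

/-! ### Height monotonicity -/

lemma derI_mono {rp : Multiset (Fm L) → Multiset (Fm L) → Prop} :
    ∀ {n Γ Δ}, DerI rp n Γ Δ → ∀ {m}, n ≤ m → DerI rp m Γ Δ := by
  intro n Γ Δ h
  induction h with
  | ax hP => intro m _; exact .ax hP
  | botL => intro m _; exact .botL
  | andL _ ih =>
    intro m hm
    obtain ⟨m', rfl⟩ : ∃ m', m = m' + 1 := ⟨m - 1, by omega⟩
    exact .andL (ih (by omega))
  | andR _ _ ih₁ ih₂ =>
    intro m hm
    obtain ⟨m', rfl⟩ : ∃ m', m = m' + 1 := ⟨m - 1, by omega⟩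
    exact .andR (ih₁ (by omega)) (ih₂ (by omega))
  | orL _ _ ih₁ ih₂ =>
    intro m hm
    obtain ⟨m', rfl⟩ : ∃ m', m = m' + 1 := ⟨m - 1, by omega⟩
    exact .orL (ih₁ (by omega)) (ih₂ (by omega))
  | orR _ ih =>
    intro m hm
    obtain ⟨m', rfl⟩ : ∃ m', m = m' + 1 := ⟨m - 1, by omega⟩
    exact .orR (ih (by omega))
  | impL _ _ ih₁ ih₂ =>
    intro m hm
    obtain ⟨m', rfl⟩ : ∃ m', m = m' + 1 := ⟨m - 1, by omega⟩
    exact .impL (ih₁ (by omega)) (ih₂ (by omega))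
  | impR _ ih =>
    intro m hm
    obtain ⟨m', rfl⟩ : ∃ m', m = m' + 1 := ⟨m - 1, by omega⟩
    exact .impR (ih (by omega))
  | allL hf _ ih =>
    intro m hm
    obtain ⟨m', rfl⟩ : ∃ m', m = m' + 1 := ⟨m - 1, by omega⟩
    exact .allL hf (ih (by omega))
  | allR hf hy hΓ _ ih =>
    intro m hm
    obtain ⟨m', rfl⟩ : ∃ m', m = m' + 1 := ⟨m - 1, by omega⟩
    exact .allR hf hy hΓ (ih (by omega))
  | exL hf hy hΓ hΔ _ ih =>
    intro m hm
    obtain ⟨m', rfl⟩ : ∃ m', m = m' + 1 := ⟨m - 1, by omega⟩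
    exact .exL hf hy hΓ hΔ (ih (by omega))
  | exR hf _ ih =>
    intro m hm
    obtain ⟨m', rfl⟩ : ∃ m', m = m' + 1 := ⟨m - 1, by omega⟩
    exact .exR hf (ih (by omega))
  | ref t _ ih =>
    intro m hm
    obtain ⟨m', rfl⟩ : ∃ m', m = m' + 1 := ⟨m - 1, by omega⟩
    exact .ref t (ih (by omega))
  | repl hrp _ ih =>
    intro m hm
    obtain ⟨m', rfl⟩ : ∃ m', m = m' + 1 := ⟨m - 1, by omega⟩
    exact .repl hrp (ih (by omega))

/-! ### The invariant -/

lemma filter_cons_pos' (A : Fm L) (hA : ¬ A.IsAtomic) (S : Multiset (Fm L)) :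
    (A ::ₘ S).filter (fun A => ¬ A.IsAtomic) = A ::ₘ S.filter (fun A => ¬ A.IsAtomic) :=
  Multiset.filter_cons_of_pos (p := fun A : Fm L => ¬ A.IsAtomic) _ hA

lemma filter_cons_neg' (A : Fm L) (hA : A.IsAtomic) (S : Multiset (Fm L)) :
    (A ::ₘ S).filter (fun A => ¬ A.IsAtomic) = S.filter (fun A => ¬ A.IsAtomic) :=
  Multiset.filter_cons_of_neg (p := fun A : Fm L => ¬ A.IsAtomic) _ (fun h => h hA)

structure Cond (S T : Multiset (Fm L)) : Prop where
  hcomp : S.filter (fun A => ¬ A.IsAtomic) = T.filter (fun A => ¬ A.IsAtomic)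
  havail : ∀ X ∈ S, Fm.IsAtomic X → AvailF T X
  hfv : ∀ X ∈ T, Fm.IsAtomic X → ∀ w ∈ Fm.freeVars X, ∃ B ∈ S, Fm.IsAtomic B ∧ w ∈ Fm.freeVars B

lemma Cond.cons {S T : Multiset (Fm L)} (A : Fm L) (hc : Cond S T) :
    Cond (A ::ₘ S) (A ::ₘ T) := by
  refine ⟨?_, ?_, ?_⟩
  · rw [Multiset.filter_cons, Multiset.filter_cons, hc.hcomp]
  · intro X hX hXa
    rcases Multiset.mem_cons.mp hX with rfl | hX'
    · exact .mem (Multiset.mem_cons_self _ _) hXa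
    · exact (hc.havail X hX' hXa).mono (fun B hB _ => Multiset.mem_cons_of_mem hB)
  · intro X hX hXa w hw
    rcases Multiset.mem_cons.mp hX with rfl | hX'
    · exact ⟨X, Multiset.mem_cons_self _ _, hXa, hw⟩
    · obtain ⟨B, hB, hBa, hBw⟩ := hc.hfv X hX' hXa w hw
      exact ⟨B, Multiset.mem_cons_of_mem hB, hBa, hBw⟩

lemma Cond.extract {A : Fm L} (hA : ¬ A.IsAtomic) {S T : Multiset (Fm L)}
    (hc : Cond (A ::ₘ S) T) : ∃ T', T = A ::ₘ T' ∧ Cond S T' := by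
  have hmem : A ∈ T := by
    have h1 : A ∈ (A ::ₘ S).filter (fun A => ¬ A.IsAtomic) :=
      Multiset.mem_filter.mpr ⟨Multiset.mem_cons_self _ _, hA⟩
    rw [hc.hcomp] at h1
    exact Multiset.mem_of_mem_filter h1
  obtain ⟨T', rfl⟩ := Multiset.exists_cons_of_mem hmem
  have hcomp' : S.filter (fun A => ¬ A.IsAtomic) = T'.filter (fun A => ¬ A.IsAtomic) := by
    have h2 := hc.hcomp
    rw [filter_cons_pos' A hA, filter_cons_pos' A hA] at h2
    exact (Multiset.cons_inj_right A).mp h2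
  refine ⟨T', rfl, hcomp', ?_, ?_⟩
  · intro X hX hXa
    refine (hc.havail X (Multiset.mem_cons_of_mem hX) hXa).mono ?_
    intro B hB hBa
    rcases Multiset.mem_cons.mp hB with rfl | hB'
    · exact absurd hBa hA
    · exact hB'
  · intro X hX hXa w hw
    obtain ⟨B, hB, hBa, hBw⟩ := hc.hfv X (Multiset.mem_cons_of_mem hX) hXa w hw
    rcases Multiset.mem_cons.mp hB with rfl | hB'
    · exact absurd hBa hA
    · exact ⟨B, hB', hBa, hBw⟩

lemma Cond.consEq (t : L.Term ℕ) {S T : Multiset (Fm L)} (hc : Cond S T) :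
    Cond (Fm.equal t t ::ₘ S) T := by
  refine ⟨?_, ?_, ?_⟩
  · rw [filter_cons_neg' _ (.equal t t), hc.hcomp]
  · intro X hX hXa
    rcases Multiset.mem_cons.mp hX with rfl | hX'
    · exact .refl t
    · exact hc.havail X hX' hXa
  · intro X hX hXa w hw
    obtain ⟨B, hB, hBa, hBw⟩ := hc.hfv X hX hXa w hw
    exact ⟨B, Multiset.mem_cons_of_mem hB, hBa, hBw⟩

lemma Cond.replStep {s r : L.Term ℕ} {v : ℕ} {Q : Fm L} (hQ : Q.IsAtomic)
    (hs : tCount v s = 0) (hr : tCount v r = 0) {Θ T : Multiset (Fm L)}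
    (hc : Cond (Fm.equal s r ::ₘ Q.subst v s ::ₘ Θ) T) :
    Cond (Fm.equal s r ::ₘ Q.subst v r ::ₘ Θ) T := by
  have hEq : AvailF T (Fm.equal s r) :=
    hc.havail _ (Multiset.mem_cons_self _ _) (.equal s r)
  have hQs : AvailF T (Q.subst v s) :=
    hc.havail _ (Multiset.mem_cons_of_mem (Multiset.mem_cons_self _ _)) (atomic_subst hQ v s)
  refine ⟨?_, ?_, ?_⟩
  · rw [filter_cons_neg' _ (.equal s r), filter_cons_neg' _ (atomic_subst hQ v r)]
    have h2 := hc.hcomp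
    rwa [filter_cons_neg' _ (.equal s r), filter_cons_neg' _ (atomic_subst hQ v s)] at h2
  · intro X hX hXa
    rcases Multiset.mem_cons.mp hX with rfl | hX'
    · exact hEq
    rcases Multiset.mem_cons.mp hX' with rfl | hX''
    · exact .step hQ hs hr hEq hQs
    · exact hc.havail X
        (Multiset.mem_cons_of_mem (Multiset.mem_cons_of_mem hX'')) hXa
  · intro X hX hXa w hw
    obtain ⟨B, hB, hBa, hBw⟩ := hc.hfv X hX hXa w hw
    rcases Multiset.mem_cons.mp hB with rfl | hB'
    · exact ⟨Fm.equal s r, Multiset.mem_cons_self _ _, .equal s r, hBw⟩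
    rcases Multiset.mem_cons.mp hB' with rfl | hB''
    · rcases freeVars_subst_sub hQ hBw with h1 | h1
      · exact ⟨Q.subst v r, Multiset.mem_cons_of_mem (Multiset.mem_cons_self _ _),
          atomic_subst hQ v r, h1⟩
      · exact ⟨Fm.equal s r, Multiset.mem_cons_self _ _, .equal s r, h1⟩
    · exact ⟨B, Multiset.mem_cons_of_mem (Multiset.mem_cons_of_mem hB''), hBa, hBw⟩

lemma Cond.notFree {S T : Multiset (Fm L)} (hc : Cond S T) {y : ℕ}
    (hS : ∀ C ∈ S, y ∉ Fm.freeVars C) : ∀ C ∈ T, y ∉ Fm.freeVars C := by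
  intro C hC hy
  by_cases hCa : C.IsAtomic
  · obtain ⟨B, hB, _, hBw⟩ := hc.hfv C hC hCa y hy
    exact hS B hB hBw
  · have hCS : C ∈ S := by
      have h1 : C ∈ T.filter (fun A => ¬ A.IsAtomic) := Multiset.mem_filter.mpr ⟨hC, hCa⟩
      rw [← hc.hcomp] at h1
      exact Multiset.mem_of_mem_filter h1
    exact hS C hCS hy

/-! ### The main induction -/

lemma gen : ∀ {n S Δ}, DerI (ReplMinus L) n S Δ → ∀ {T}, Cond S T → Der T Δ := by
  intro n S Δ h
  induction h with
  | @ax n Γ Δ P hP =>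
    intro T hc
    have hav : AvailF T P := hc.havail P (Multiset.mem_cons_self _ _) hP
    obtain ⟨M', hch, _⟩ := lemAtom hav T le_rfl
    exact hch.sound ⟨0, .ax hP⟩
  | @botL n Γ Δ =>
    intro T hc
    have hmem : (Fm.falsum : Fm L) ∈ T := by
      have h1 : (Fm.falsum : Fm L) ∈ (Fm.falsum ::ₘ Γ).filter (fun A => ¬ A.IsAtomic) :=
        Multiset.mem_filter.mpr ⟨Multiset.mem_cons_self _ _, not_atomic_falsum⟩
      rw [hc.hcomp] at h1
      exact Multiset.mem_of_mem_filter h1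
    obtain ⟨T', rfl⟩ := Multiset.exists_cons_of_mem hmem
    exact ⟨0, .botL⟩
  | @andL n Γ Δ A B _ ih =>
    intro T hc
    obtain ⟨T', rfl, hc'⟩ := Cond.extract not_atomic_and hc
    obtain ⟨k, hk⟩ := ih (Cond.cons A (Cond.cons B hc'))
    exact ⟨k + 1, .andL hk⟩
  | @andR n Γ Δ A B _ _ ih₁ ih₂ =>
    intro T hc
    obtain ⟨k₁, hk₁⟩ := ih₁ hc
    obtain ⟨k₂, hk₂⟩ := ih₂ hc
    exact ⟨max k₁ k₂ + 1, .andR (derI_mono hk₁ (le_max_left _ _))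
      (derI_mono hk₂ (le_max_right _ _))⟩
  | @orL n Γ Δ A B _ _ ih₁ ih₂ =>
    intro T hc
    obtain ⟨T', rfl, hc'⟩ := Cond.extract not_atomic_or hc
    obtain ⟨k₁, hk₁⟩ := ih₁ (Cond.cons A hc')
    obtain ⟨k₂, hk₂⟩ := ih₂ (Cond.cons B hc')
    exact ⟨max k₁ k₂ + 1, .orL (derI_mono hk₁ (le_max_left _ _))
      (derI_mono hk₂ (le_max_right _ _))⟩
  | @orR n Γ Δ A B _ ih =>
    intro T hc
    obtain ⟨k, hk⟩ := ih hc
    exact ⟨k + 1, .orR hk⟩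
  | @impL n Γ Δ A B _ _ ih₁ ih₂ =>
    intro T hc
    obtain ⟨T', rfl, hc'⟩ := Cond.extract not_atomic_imp hc
    obtain ⟨k₁, hk₁⟩ := ih₁ hc
    obtain ⟨k₂, hk₂⟩ := ih₂ (Cond.cons B hc')
    exact ⟨max k₁ k₂ + 1, .impL (derI_mono hk₁ (le_max_left _ _))
      (derI_mono hk₂ (le_max_right _ _))⟩
  | @impR n Γ Δ A B _ ih =>
    intro T hc
    obtain ⟨k, hk⟩ := ih (Cond.cons A hc)
    exact ⟨k + 1, .impR hk⟩
  | @allL n Γ Δ x t A hf _ ih =>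
    intro T hc
    obtain ⟨T', rfl, hc'⟩ := Cond.extract not_atomic_all hc
    obtain ⟨k, hk⟩ := ih (Cond.cons (A.subst x t) hc)
    exact ⟨k + 1, .allL hf hk⟩
  | @allR n Γ Δ x y A hf hy hΓ _ ih =>
    intro T hc
    obtain ⟨k, hk⟩ := ih hc
    exact ⟨k + 1, .allR hf hy (hc.notFree hΓ) hk⟩
  | @exL n Γ Δ x y A hf hy hΓ hΔ _ ih =>
    intro T hc
    obtain ⟨T', rfl, hc'⟩ := Cond.extract not_atomic_ex hc
    obtain ⟨k, hk⟩ := ih (Cond.cons (A.subst x (Term.var y)) hc')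
    exact ⟨k + 1, .exL hf hy (hc'.notFree hΓ) hΔ hk⟩
  | @exR n Γ Δ x t A hf _ ih =>
    intro T hc
    obtain ⟨k, hk⟩ := ih hc
    exact ⟨k + 1, .exR hf hk⟩
  | @ref n Γ Δ t _ ih =>
    intro T hc
    exact ih (Cond.consEq t hc)
  | @repl n Γp Γc Δ hrp _ ih =>
    intro T hc
    obtain ⟨s, r, v, Q, Θ, hQ, hs, hr, hp, hcon⟩ := hrp
    subst hp
    subst hcon
    exact ih (Cond.replStep hQ hs hr hc)

end Admissibility

/-- The rule Repl is admissible in the intuitionistic calculus `G3i^=⁻`: for atomic `P`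
and `v` not occurring in `s`, `r`, if `s = r, P[v/s], P[v/r], Γ ⇒ Δ` is derivable then
so is `s = r, P[v/s], Γ ⇒ Δ`. -/
theorem repl_admissible_G3iEqMinus (L : FirstOrder.Language.{u, v})
    (P : Fm L) (hP : P.IsAtomic) (v : ℕ)
    (s r : L.Term ℕ) (hs : tCount v s = 0) (hr : tCount v r = 0)
    (Γ Δ : Multiset (Fm L))
    (hd : ∃ n, DerI (ReplMinus L) n
      (Fm.equal s r ::ₘ P.subst v s ::ₘ P.subst v r ::ₘ Γ) Δ) :
    ∃ n, DerI (ReplMinus L) n (Fm.equal s r ::ₘ P.subst v s ::ₘ Γ) Δ := by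
  obtain ⟨n, hd⟩ := hd
  have hc : Cond (Fm.equal s r ::ₘ P.subst v s ::ₘ P.subst v r ::ₘ Γ)
      (Fm.equal s r ::ₘ P.subst v s ::ₘ Γ) := by
    refine ⟨?_, ?_, ?_⟩
    · rw [filter_cons_neg' _ (.equal s r), filter_cons_neg' _ (atomic_subst hP v s),
        filter_cons_neg' _ (atomic_subst hP v r), filter_cons_neg' _ (.equal s r),
        filter_cons_neg' _ (atomic_subst hP v s)]
    · intro X hX hXa
      rcases Multiset.mem_cons.mp hX with rfl | hX
      · exact .mem (Multiset.mem_cons_self _ _) hXa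
      rcases Multiset.mem_cons.mp hX with rfl | hX
      · exact .mem (Multiset.mem_cons_of_mem (Multiset.mem_cons_self _ _)) hXa
      rcases Multiset.mem_cons.mp hX with rfl | hX
      · exact .step hP hs hr (.mem (Multiset.mem_cons_self _ _) (.equal s r))
          (.mem (Multiset.mem_cons_of_mem (Multiset.mem_cons_self _ _)) (atomic_subst hP v s))
      · exact .mem (Multiset.mem_cons_of_mem (Multiset.mem_cons_of_mem hX)) hXa
    · intro X hX hXa w hw
      refine ⟨X, ?_, hXa, hw⟩
      rcases Multiset.mem_cons.mp hX with rfl | hX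
      · exact Multiset.mem_cons_self _ _
      rcases Multiset.mem_cons.mp hX with rfl | hX
      · exact Multiset.mem_cons_of_mem (Multiset.mem_cons_self _ _)
      · exact Multiset.mem_cons_of_mem
          (Multiset.mem_cons_of_mem (Multiset.mem_cons_of_mem hX))
  obtain ⟨k, hk⟩ := gen hd hc
  exact ⟨k, hk⟩
end
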